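/- arXiv:2010.03974 — 14 statements merged into one kernel-verified Lean document; each statement's English description precedes it below -/
import Mathlib

section
/- Let f : M → ℂ be a non-zero solution of the functional equation f(xσ(y)) + f(τ(y)x) = 2f(x)f(y) for all x, y ∈ M. Then f(e) = 1 and f(σ(x)) + f(τ(x)) = 2f(x) for all x ∈ M. -/
theorem stmt0 {M : Type*} [Monoid M] (σ τ : M → M)
    (hσmul : ∀ x y : M, σ (x * y) = σ x * σ y) (hσinv : ∀ x : M, σ (σ x) = x)
    (hτmul : ∀ x y : M, τ (x * y) = τ y * τ x) (hτinv : ∀ x : M, τ (τ x) = x)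
    (f : M → ℂ) (hf : f ≠ 0)
    (heq : ∀ x y : M, f (x * σ y) + f (τ y * x) = 2 * f x * f y) :
    f 1 = 1 ∧ ∀ x : M, f (σ x) + f (τ x) = 2 * f x := by
  have hσ1 : σ 1 = 1 := by
    have h := hσmul (σ 1) 1
    rw [mul_one, hσinv] at h
    simpa using h.symm
  have hτ1 : τ 1 = 1 := by
    have h := hτmul 1 (τ 1)
    rw [one_mul, hτinv] at h
    simpa using h.symm
  have hf1 : f 1 = 1 := by
    obtain ⟨x0, hx0⟩ : ∃ x, f x ≠ 0 := by
      by_contra h; push_neg at h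
      exact hf (funext fun x => h x)
    have h := heq x0 1
    rw [hσ1, hτ1, mul_one, one_mul] at h
    have : 2 * f x0 = 2 * f x0 * f 1 := by linear_combination h
    field_simp at this
    tauto
  refine ⟨hf1, fun x => ?_⟩
  have h := heq 1 x
  rw [one_mul, mul_one, hf1] at h
  linear_combination h
end

section
/- Let f : S → ℂ be a non-zero solution of the functional equation f(xσ(y)) + f(τ(y)x) = 2f(x)f(y) for all x, y ∈ S. Then f(σ(a)σ(x)σ(y)) + f(σ(a)σ(y)σ(x)) = 2f(σ(a))f(yx) + 2f(x)f(σ(a)σ(y)) + 2f(σ(a)σ(x))f(y) − 4f(σ(a))f(x)f(y) for all a, x, y ∈ S. -/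
theorem stmt1 {S : Type*} [Semigroup S] (σ τ : S → S)
    (hσmul : ∀ x y : S, σ (x * y) = σ x * σ y) (hσinv : ∀ x : S, σ (σ x) = x)
    (hτmul : ∀ x y : S, τ (x * y) = τ y * τ x) (hτinv : ∀ x : S, τ (τ x) = x)
    (f : S → ℂ) (hf : f ≠ 0)
    (heq : ∀ x y : S, f (x * σ y) + f (τ y * x) = 2 * f x * f y) :
    ∀ a x y : S,
      f (σ a * σ x * σ y) + f (σ a * σ y * σ x) =
        2 * f (σ a) * f (y * x) + 2 * f x * f (σ a * σ y) +
          2 * f (σ a * σ x) * f y - 4 * f (σ a) * f x * f y := by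
  intro a x y
  have h1 := heq (σ a * σ x) y
  have h2 := heq (τ y * σ a) x
  have h3 := heq (σ a) (y * x)
  have h4 := heq (σ a) y
  rw [hσmul, hτmul] at h3
  simp only [mul_assoc] at *
  linear_combination h1 - h2 + h3 - 2 * f x * h4
end

section
/- Let f : S → ℂ be a non-zero solution of the functional equation f(xσ(y)) + f(τ(y)x) = 2f(x)f(y) for all x, y ∈ S. Then f is central, i.e. f(xy) = f(yx) for all x, y ∈ S. -/
theorem stmt2 {S : Type*} [Semigroup S] (σ τ : S → S)
    (hσmul : ∀ x y : S, σ (x * y) = σ x * σ y) (hσinv : ∀ x : S, σ (σ x) = x)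
    (hτmul : ∀ x y : S, τ (x * y) = τ y * τ x) (hτinv : ∀ x : S, τ (τ x) = x)
    (f : S → ℂ) (hf : f ≠ 0)
    (heq : ∀ x y : S, f (x * σ y) + f (τ y * x) = 2 * f x * f y) :
    ∀ x y : S, f (x * y) = f (y * x) := by
  obtain ⟨x0, hx0⟩ := Function.ne_iff.mp hf
  rw [Pi.zero_apply] at hx0
  -- Key identity obtained by expanding 4 f(x) f(y) f(z) in two ways.
  have key : ∀ x y z : S,
      f (x * σ y * σ z) + f (τ z * τ y * x)
        = f (x * σ z * σ y) + f (τ y * τ z * x) := by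
    intro x y z
    have h1 := heq (x * σ y) z
    have h2 := heq (τ y * x) z
    have h1' := heq (x * σ z) y
    have h2' := heq (τ z * x) y
    have h3 := heq x y
    have h3' := heq x z
    simp only [← mul_assoc] at h1 h2 h1' h2'
    linear_combination h1 + h2 - h1' - h2' + 2 * f z * h3 - 2 * f y * h3'
  -- Substituting y ↦ σ w in the functional equation.
  have two : ∀ x w : S, f (x * w) + f (τ (σ w) * x) = 2 * f x * f (σ w) := by
    intro x w
    have h := heq x (σ w)
    rwa [hσinv] at h
  have main : ∀ a b : S, f (σ a * σ b) = f (σ b * σ a) := by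
    intro a b
    have hk := key x0 (σ a) (σ b)
    rw [hσinv, hσinv] at hk
    have t1 := two x0 (a * b)
    have t2 := two x0 (b * a)
    rw [hσmul, hτmul] at t1 t2
    simp only [← mul_assoc] at t1 t2
    have hcan : 2 * f x0 * f (σ a * σ b) = 2 * f x0 * f (σ b * σ a) := by
      linear_combination hk - t1 + t2
    have h2x0 : (2 : ℂ) * f x0 ≠ 0 := mul_ne_zero two_ne_zero hx0
    exact mul_left_cancel₀ h2x0 hcan
  intro x y
  have h := main (σ x) (σ y)
  rwa [hσinv, hσinv] at h
end

section
/- Let f : S → ℂ be a non-zero solution of the functional equation f(xσ(y)) + f(τ(y)x) = 2f(x)f(y) for all x, y ∈ S. Then there exists a non-zero constant λ ∈ ℂ such that f(σ(x)) + f(τ(x)) = λ f(x) for all x ∈ S. -/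
theorem stmt3 {S : Type*} [Semigroup S] (σ τ : S → S)
    (hσmul : ∀ x y : S, σ (x * y) = σ x * σ y) (hσinv : ∀ x : S, σ (σ x) = x)
    (hτmul : ∀ x y : S, τ (x * y) = τ y * τ x) (hτinv : ∀ x : S, τ (τ x) = x)
    (f : S → ℂ) (hf : f ≠ 0)
    (heq : ∀ x y : S, f (x * σ y) + f (τ y * x) = 2 * f x * f y) :
    ∃ lam : ℂ, lam ≠ 0 ∧ ∀ x : S, f (σ x) + f (τ x) = lam * f x := by
  -- pick a point where f is nonzero
  have hx0 : ∃ x0 : S, f x0 ≠ 0 := by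
    by_contra h
    push_neg at h
    exact hf (funext fun x => h x)
  obtain ⟨x0, hx0⟩ := hx0
  -- centrality of f
  have hc : ∀ y z : S, f (y * z) = f (z * y) := by
    intro y z
    have e1 := heq (x0 * σ y) z
    have e2 := heq (τ y * x0) z
    have e3 := heq x0 (y * z)
    have e0 := heq x0 y
    have f1 := heq (x0 * σ z) y
    have f2 := heq (τ z * x0) y
    have f3 := heq x0 (z * y)
    have f0 := heq x0 z
    rw [hσmul, hτmul] at e3 f3
    simp only [mul_assoc] at e1 e2 e3 f1 f2 f3
    have h2 : f x0 * f (y * z) = f x0 * f (z * y) := by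
      linear_combination (e1 + e2 - e3 + 2 * f z * e0 - (f1 + f2 - f3 + 2 * f y * f0)) / 2
    exact mul_left_cancel₀ hx0 h2
  -- the key symmetry: g x * f y = g y * f x
  have hsym : ∀ x y : S, (f (σ x) + f (τ x)) * f y = (f (σ y) + f (τ y)) * f x := by
    intro x y
    have a1 := heq (σ x) y
    have a2 := heq (τ x) y
    have b1 := heq (σ y) x
    have b2 := heq (τ y) x
    have c1 := hc (σ x) (σ y)
    have c2 := hc (τ y) (τ x)
    linear_combination (b1 + b2 - a1 - a2 + c1 + c2) / 2
  set lam : ℂ := (f (σ x0) + f (τ x0)) / f x0 with hlamdef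
  have hlam : ∀ x : S, f (σ x) + f (τ x) = lam * f x := by
    intro x
    rw [hlamdef, div_mul_eq_mul_div, eq_div_iff hx0]
    linear_combination hsym x x0
  refine ⟨lam, ?_, hlam⟩
  -- now show lam ≠ 0
  intro h0
  have hg : ∀ x : S, f (σ x) + f (τ x) = 0 := by
    intro x; rw [hlam x, h0, zero_mul]
  have hτf : ∀ x : S, f (τ x) = - f (σ x) := by
    intro x; linear_combination hg x
  have hE : ∀ x y : S, f (x * σ y) + f (x * τ y) = 2 * f x * f y := by
    intro x y
    linear_combination heq x y - hc (τ y) x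
  have hL : ∀ x y : S, f (σ x * τ y) = - f (τ x * σ y) := by
    intro x y
    have a1 := heq (σ x) y
    have a2 := heq (τ x) y
    have hgxy := hg (x * y)
    rw [hσmul, hτmul] at hgxy
    linear_combination a1 + a2 - hgxy - hc (τ y) (σ x) + 2 * f y * hg x
  have hAA : ∀ x w : S, f (σ x * σ w) = f (σ x) * f w + f (σ w) * f x := by
    intro x w
    have i := hE (σ x) w
    have ii := hL x w
    have iii := hc (τ x) (σ w)
    have iv := hE (σ w) x
    have v := hc (σ x) (σ w)
    linear_combination (i + iv - ii + iii + v) / 2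
  have hHH : ∀ x z : S, f (x * z) = f x * f (σ z) + f z * f (σ x) := by
    intro x z
    have := hAA (σ x) (σ z)
    rw [hσinv, hσinv] at this
    linear_combination this
  have hστ : ∀ y : S, f (σ (τ y)) = - f y := by
    intro y
    have := hτf (τ y)
    rw [hτinv] at this
    linear_combination this
  have e := heq x0 x0
  have h1 := hHH x0 (σ x0)
  have h2 := hHH (τ x0) x0
  rw [hσinv] at h1
  have h3 := hτf x0
  have h4 := hστ x0
  have hz : f x0 * f x0 = 0 := by
    linear_combination -(e - h1 - h2 - f (σ x0) * h3 - f x0 * h4) / 2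
  exact hx0 (mul_self_eq_zero.mp hz)
end

section
/- Let f : S → ℂ be a non-zero solution of the functional equation f(xσ(y)) + f(τ(y)x) = 2f(x)f(y) for all x, y ∈ S. Then f is a solution of the pre-d'Alembert functional equation: f(axy) + f(ayx) = 2f(a)f(xy) + 2f(x)f(ay) + 2f(ax)f(y) − 4f(a)f(x)f(y) for all a, x, y ∈ S. -/
theorem stmt4 {S : Type*} [Semigroup S] (σ τ : S → S)
    (hσmul : ∀ x y : S, σ (x * y) = σ x * σ y) (hσinv : ∀ x : S, σ (σ x) = x)
    (hτmul : ∀ x y : S, τ (x * y) = τ y * τ x) (hτinv : ∀ x : S, τ (τ x) = x)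
    (f : S → ℂ) (hf : f ≠ 0)
    (heq : ∀ x y : S, f (x * σ y) + f (τ y * x) = 2 * f x * f y) :
    ∀ a x y : S,
      f (a * x * y) + f (a * y * x) =
        2 * f a * f (x * y) + 2 * f x * f (a * y) + 2 * f (a * x) * f y -
          4 * f a * f x * f y := by
  obtain ⟨u₀, hu₀⟩ := Function.ne_iff.mp hf
  simp only [Pi.zero_apply] at hu₀
  -- identity (A)
  have A : ∀ x y z : S,
      f (x * (σ y * σ z)) + f (x * (σ z * σ y)) =
        2 * f (x * σ y) * f z - 2 * f (τ z * x) * f y + 2 * f x * f (z * y) := by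
    intro x y z
    have e1 := heq (x * σ y) z
    have e5 := heq (τ z * x) y
    have e2' := heq x (z * y)
    rw [hσmul, hτmul] at e2'
    simp only [mul_assoc] at e1 e5 e2' ⊢
    linear_combination e1 - e5 + e2'
  -- centrality
  have cent : ∀ y z : S, f (y * z) = f (z * y) := by
    intro y z
    have a1 := A u₀ y z
    have a2 := A u₀ z y
    have ey := heq u₀ y
    have ez := heq u₀ z
    have h2 : 2 * f u₀ * f (y * z) = 2 * f u₀ * f (z * y) := by
      linear_combination a1 - a2 + 2 * f z * ey - 2 * f y * ez
    exact mul_left_cancel₀ (mul_ne_zero two_ne_zero hu₀) h2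
  -- K3
  have K3 : ∀ u v : S,
      f (σ u * σ v) - f (τ v * τ u) = 2 * f (σ u) * f v - 2 * f u * f (τ v) := by
    intro u v
    have e1 := heq (σ u) v
    have e2 := heq (τ v) u
    have c := cent (τ u) (τ v)
    linear_combination e1 - e2 + c
  obtain ⟨k, hk'⟩ : ∃ k : ℂ, f (σ u₀) + f (τ u₀) = k * f u₀ :=
    ⟨(f (σ u₀) + f (τ u₀)) / f u₀, (div_mul_cancel₀ _ hu₀).symm⟩
  have K4 : ∀ v : S, f (σ v) + f (τ v) = k * f v := by
    intro v
    have h1 := K3 u₀ v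
    have h2 := K3 v u₀
    have c1 : f (σ u₀ * σ v) = f (σ v * σ u₀) := cent _ _
    have c2 : f (τ v * τ u₀) = f (τ u₀ * τ v) := cent _ _
    have key : f u₀ * (f (σ v) + f (τ v)) = f u₀ * (k * f v) := by
      linear_combination (h1 - h2 - c1 + c2) / 2 + f v * hk'
    exact mul_left_cancel₀ hu₀ key
  have K4m : ∀ u v : S, f (σ u * σ v) + f (τ v * τ u) = k * f (u * v) := by
    intro u v
    have h := K4 (u * v)
    rw [hσmul, hτmul] at h
    exact h
  have K5 : ∀ u v : S, 2 * f (σ u * σ v) =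
      k * f (u * v) + 2 * f (σ u) * f v + 2 * f u * f (σ v) - 2 * k * f u * f v := by
    intro u v
    linear_combination K3 u v + K4m u v - 2 * f u * K4 v
  have K5h : ∀ u v : S, 2 * f (τ v * τ u) =
      k * f (u * v) + 2 * f (τ u) * f v + 2 * f u * f (τ v) - 2 * k * f u * f v := by
    intro u v
    linear_combination 2 * K4m u v - K5 u v - 2 * f v * K4 u - 2 * f u * K4 v
  have l2 : ∀ u v : S, 2 * f (σ u * v) =
      k * f (u * σ v) + 2 * f (σ u) * f (σ v) + 2 * f u * f v - 2 * k * f u * f (σ v) := by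
    intro u v
    have h := K5 u (σ v)
    rw [hσinv] at h
    exact h
  have l2h : ∀ u v : S, 2 * f (τ u * v) =
      k * f (u * τ v) + 2 * f (τ u) * f (τ v) + 2 * f u * f v - 2 * k * f u * f (τ v) := by
    intro u v
    have h := K5h u (τ v)
    rw [hτinv] at h
    have c := cent (τ u) v
    linear_combination h + 2 * c
  have N : ∀ u v : S, (2 * f (σ u) - k * f u) * (2 * f (σ v) - k * f v)
      = k * (k - 2) * (f u * f v) := by
    intro u v
    have h1 := l2 u v
    have h2 := l2h u v
    have m1 := heq u v
    have m2 := heq v u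
    have c1 := cent (τ v) u
    have c2 := cent v (σ u)
    rw [c1] at m1
    rw [c2] at m2
    have t1 : f (τ u) = k * f u - f (σ u) := by linear_combination K4 u
    have t2 : f (τ v) = k * f v - f (σ v) := by linear_combination K4 v
    rw [t1, t2] at h2
    linear_combination -h1 - h2 - k * m1 + 2 * m2
  -- f ∘ σ = f
  have gf : ∀ v : S, f (σ v) = f v := by
    by_cases hk2 : k * (k - 2) = 0
    · -- P ≡ 0 case
      have P0 : ∀ w : S, 2 * f (σ w) - k * f w = 0 := by
        intro w
        have n := N w w
        have hsq : (2 * f (σ w) - k * f w) ^ 2 = 0 := by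
          linear_combination n + (f w * f w) * hk2
        exact pow_eq_zero_iff two_ne_zero |>.mp hsq
      have h1 := P0 u₀
      have h2 := P0 (σ u₀)
      rw [hσinv] at h2
      have h4 : (k * k - 4) * f u₀ = 0 := by linear_combination -(k * h1) - 2 * h2
      have h5 : k * k - 4 = 0 := by
        rcases mul_eq_zero.mp h4 with h | h
        · exact h
        · exact absurd h hu₀
      have hkk : k = 2 := by
        rcases mul_eq_zero.mp hk2 with h | h
        · rw [h] at h5; norm_num at h5
        · linear_combination h
      intro v
      have := P0 v
      rw [hkk] at this
      linear_combination this / 2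
    · -- contradiction case
      exfalso
      have hP : 2 * f (σ u₀) - k * f u₀ ≠ 0 := by
        intro h
        have n := N u₀ u₀
        rw [h] at n
        have n0 : k * (k - 2) * (f u₀ * f u₀) = 0 := by linear_combination -n
        rcases mul_eq_zero.mp n0 with h' | h'
        · exact hk2 h'
        · rcases mul_eq_zero.mp h' with h'' | h'' <;> exact hu₀ h''
      obtain ⟨μ, hpμ⟩ : ∃ μ : ℂ,
          (2 * f (σ u₀) - k * f u₀) * μ = k * (k - 2) * f u₀ := by
        refine ⟨k * (k - 2) * f u₀ / (2 * f (σ u₀) - k * f u₀), ?_⟩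
        rw [mul_comm]
        exact div_mul_cancel₀ _ hP
      have hμv : ∀ v : S, 2 * f (σ v) - k * f v = μ * f v := by
        intro v
        have key : (2 * f (σ u₀) - k * f u₀) * (2 * f (σ v) - k * f v)
            = (2 * f (σ u₀) - k * f u₀) * (μ * f v) := by
          linear_combination N u₀ v - f v * hpμ
        exact mul_left_cancel₀ hP key
      have hμ2 : μ * μ = k * (k - 2) := by
        have h := hμv u₀
        have n := N u₀ u₀
        have hz : (μ * μ - k * (k - 2)) * (f u₀ * f u₀) = 0 := by
          linear_combination n - (μ * f u₀ + 2 * f (σ u₀) - k * f u₀) * h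
        rcases mul_eq_zero.mp hz with h' | h'
        · linear_combination h'
        · rcases mul_eq_zero.mp h' with h'' | h'' <;> exact absurd h'' hu₀
      have hμ0 : μ ≠ 0 := by
        intro h
        rw [h] at hμ2
        exact hk2 (by linear_combination -hμ2)
      have hF : ∀ u v : S, f (u * v) = 2 * f u * f v := by
        intro u v
        have h5 := K5 u v
        have hσuv := hμv (u * v)
        rw [hσmul] at hσuv
        have hh : μ * f (u * v) = μ * (2 * f u * f v) := by
          linear_combination h5 - hσuv + f v * hμv u + f u * hμv v
        exact mul_left_cancel₀ hμ0 hh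
      have hk1 : k = 1 := by
        have e0 := heq u₀ u₀
        have f1 := hF u₀ (σ u₀)
        have f2 := hF (τ u₀) u₀
        have k40 := K4 u₀
        have hz : (k - 1) * (f u₀ * f u₀) = 0 := by
          linear_combination (e0 - f1 - f2) / 2 - f u₀ * k40
        rcases mul_eq_zero.mp hz with h | h
        · linear_combination h
        · rcases mul_eq_zero.mp h with h' | h' <;> exact absurd h' hu₀
      have a1 := hμv u₀
      have a2 := hμv (σ u₀)
      rw [hσinv] at a2
      have hsq : ((k + μ) * (k + μ) - 4) * f u₀ = 0 := by
        linear_combination -((k + μ) * a1) - 2 * a2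
      have hsq' : (k + μ) * (k + μ) = 4 := by
        rcases mul_eq_zero.mp hsq with h | h
        · linear_combination h
        · exact absurd h hu₀
      rw [hk1] at hμ2 hsq'
      have hm : μ = 2 := by linear_combination (hsq' - hμ2) / 2
      rw [hm] at hμ2
      norm_num at hμ2
  -- conclusion
  intro a x y
  have hA := A a (σ x) (σ y)
  simp only [hσinv] at hA
  rw [show f (σ y * σ x) = f (σ (y * x)) by rw [hσmul]] at hA
  have e := heq a (σ y)
  rw [hσinv] at e
  rw [gf x, gf y, gf (y * x)] at hA
  rw [gf y] at e
  have c := cent y x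
  simp only [mul_assoc] at hA e ⊢
  linear_combination hA - 2 * f x * e + 2 * f a * c
end

section
/- Let f : M → ℂ be a non-zero abelian solution of the functional equation f(xσ(y)) + f(τ(y)x) = 2f(x)f(y) for all x, y ∈ M. Then there exists a multiplicative function χ : M → ℂ (χ(xy) = χ(x)χ(y) for all x, y ∈ M) such that χ∘σ∘τ = χ∘τ∘σ, χ∘σ = χ or χ∘τ = χ, and f = (χ + χ∘σ∘τ)/2. -/
/-- A function `f : M → ℂ` on a monoid is abelian if
`f(x₁x₂⋯xₙ) = f(x_{ε(1)}x_{ε(2)}⋯x_{ε(n)})` for every `n ≥ 2`, all `x₁, …, xₙ ∈ M`,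
and every permutation `ε` of `{1, …, n}`. -/
def IsAbelianFn {M : Type*} [Monoid M] (f : M → ℂ) : Prop :=
  ∀ n : ℕ, 2 ≤ n → ∀ (x : Fin n → M) (ε : Equiv.Perm (Fin n)),
    f (List.ofFn x).prod = f (List.ofFn (x ∘ ε)).prod

theorem stmt5 {M : Type*} [Monoid M] (σ τ : M → M)
    (hσmul : ∀ x y : M, σ (x * y) = σ x * σ y) (hσinv : ∀ x : M, σ (σ x) = x)
    (hτmul : ∀ x y : M, τ (x * y) = τ y * τ x) (hτinv : ∀ x : M, τ (τ x) = x)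
    (f : M → ℂ) (hf : f ≠ 0) (habel : IsAbelianFn f)
    (heq : ∀ x y : M, f (x * σ y) + f (τ y * x) = 2 * f x * f y) :
    ∃ χ : M → ℂ, (∀ x y : M, χ (x * y) = χ x * χ y) ∧
      (∀ x : M, χ (σ (τ x)) = χ (τ (σ x))) ∧
      ((∀ x : M, χ (σ x) = χ x) ∨ (∀ x : M, χ (τ x) = χ x)) ∧
      (∀ x : M, f x = (χ x + χ (σ (τ x))) / 2) := by
  -- abelian helper lemmas
  have fcomm : ∀ a b : M, f (a * b) = f (b * a) := by
    intro a b
    have h := habel 2 le_rfl ![a, b] (Equiv.swap 0 1)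
    simpa [List.ofFn_succ, mul_assoc] using h
  have fswap3 : ∀ a b c : M, f (a * b * c) = f (a * c * b) := by
    intro a b c
    have h := habel 3 (by norm_num) ![a, b, c] (Equiv.swap 1 2)
    simpa [List.ofFn_succ, mul_assoc, Equiv.swap_apply_of_ne_of_ne] using h
  have fswap4 : ∀ a b c d : M, f (a * b * c * d) = f (a * c * b * d) := by
    intro a b c d
    have h := habel 4 (by norm_num) ![a, b, c, d] (Equiv.swap 1 2)
    simpa [List.ofFn_succ, mul_assoc, Equiv.swap_apply_of_ne_of_ne] using h
  -- σ 1 = 1, τ 1 = 1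
  have hσe : σ (1 : M) = 1 := by
    have h1 : ∀ y : M, y * σ 1 = y := fun y => by
      rw [← hσinv y, ← hσmul, mul_one]
    have := h1 1
    rwa [one_mul] at this
  have hτe : τ (1 : M) = 1 := by
    have h1 : ∀ y : M, τ 1 * y = y := fun y => by
      rw [← hτinv y, ← hτmul, mul_one]
    have := h1 1
    rwa [mul_one] at this
  -- f 1 = 1
  obtain ⟨x₀, hx₀⟩ : ∃ x, f x ≠ 0 := by
    by_contra h
    push_neg at h
    exact hf (funext fun x => h x)
  have fone : f (1 : M) = 1 := by
    have h := heq x₀ 1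
    rw [hσe, hτe, mul_one, one_mul] at h
    have h2 : 2 * f x₀ * f 1 = 2 * f x₀ * 1 := by linear_combination -h
    exact mul_left_cancel₀ (mul_ne_zero two_ne_zero hx₀) h2
  -- symmetrized equation
  have fE : ∀ x y : M, f (x * σ y) + f (x * τ y) = 2 * f x * f y := by
    intro x y
    rw [fcomm x (τ y)]
    exact heq x y
  -- key identity (5)
  have K5 : ∀ x y z : M, f (x * σ y * σ z) + f (x * τ y * τ z) = 2 * f x * f (y * z) := by
    intro x y z
    have h := fE x (y * z)
    rw [hσmul, hτmul, ← mul_assoc, ← mul_assoc, fswap3 x (τ z) (τ y)] at h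
    exact h
  -- key identity (6)
  have K6 : ∀ x y z : M, f (x * σ y * τ z) + f (x * τ y * σ z)
      = 4 * f x * f y * f z - 2 * f x * f (y * z) := by
    intro x y z
    have h1 := fE (x * σ y) z
    have h3 := fE (x * τ y) z
    have hxy := fE x y
    have h5 := K5 x y z
    linear_combination h1 + h3 - h5 + 2 * f z * hxy
  -- identity S0
  have S0 : ∀ x y z : M, f (x * y * z)
      = f (x * y) * f (σ z) + f (x * z) * f (σ y)
        - 2 * f x * f (σ y) * f (σ z) + f x * f (σ (y * z)) := by
    intro x y z
    have h1 := fE (x * y) (σ z)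
    rw [hσinv] at h1
    have h2 := fE (x * z) (σ y)
    rw [hσinv, fswap3 x z y, fswap3 x z (τ (σ y))] at h2
    have h6 := K6 x (σ y) (σ z)
    rw [hσinv, hσinv, ← hσmul] at h6
    linear_combination (h1 + h2 - h6) / 2
  -- identity T0
  have T0 : ∀ x y z : M, f (x * y * z)
      = f (x * y) * f (τ z) + f (x * z) * f (τ y)
        - 2 * f x * f (τ y) * f (τ z) + f x * f (τ (z * y)) := by
    intro x y z
    have h1 := fE (x * y) (τ z)
    rw [hτinv] at h1
    have h2 := fE (x * z) (τ y)
    rw [hτinv, fswap3 x z y, fswap3 x z (σ (τ y))] at h2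
    have h6 := K6 x (τ y) (τ z)
    rw [hτinv, hτinv, ← hτmul] at h6
    linear_combination (h1 + h2 - h6) / 2
  -- f(σ y) + f(τ y) = 2 f(y)
  have feq1 : ∀ y : M, f (σ y) + f (τ y) = 2 * f y := by
    intro y
    have h := fE 1 y
    rw [one_mul, one_mul, fone] at h
    linear_combination h
  -- Lemma A : f ∘ σ = f
  have key : ∀ x z : M, (f (σ x) - f x) * (f (σ z) - f z) = 0 := by
    intro x z
    have e1 := S0 1 x z
    simp only [one_mul, fone] at e1
    have e2 := T0 1 x z
    simp only [one_mul, fone] at e2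
    have e3 := feq1 (z * x)
    have e4 : f (σ (x * z)) = f (σ (z * x)) := by
      rw [hσmul, hσmul, fcomm]
    have e5 := fcomm x z
    have e6 := feq1 x
    have e7 := feq1 z
    linear_combination (e1 + e2 + e3 + e4 - 2 * e5
      + (f z - 2 * f (τ z)) * e6 + (2 * f (σ x) - 3 * f x) * e7) / 4
  have hσf : ∀ y : M, f (σ y) = f y := by
    intro y
    exact sub_eq_zero.mp (mul_self_eq_zero.mp (key y y))
  have hτf : ∀ y : M, f (τ y) = f y := by
    intro y
    have h := feq1 y
    rw [hσf] at h
    linear_combination h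
  -- Kannappan identity
  have Sstar : ∀ x y z : M, f (x * y * z)
      = f (x * y) * f z + f (x * z) * f y + f x * f (y * z) - 2 * f x * f y * f z := by
    intro x y z
    have h := S0 x y z
    rw [hσf, hσf, hσf] at h
    linear_combination h
  -- rank one identity
  have R1 : ∀ x y u v : M, (f (x * y) - f x * f y) * (f (u * v) - f u * f v)
      = (f (x * u) - f x * f u) * (f (y * v) - f y * f v) := by
    intro x y u v
    have hA := Sstar (x * y) u v
    have hA1 := Sstar x y u
    have hA2 := Sstar x y v
    have hB := Sstar (x * u) y v
    have hB1 := Sstar x u y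
    have hB2 := Sstar x u v
    have hs := fswap4 x y u v
    have hc1 := fcomm y u
    linear_combination -hA + hB + hs - f v * hA1 - f u * hA2 + f v * hB1 + f y * hB2
      - f x * f v * hc1
  by_cases hm : ∀ x y : M, f (x * y) = f x * f y
  · -- f is multiplicative
    refine ⟨f, hm, ?_, Or.inl hσf, ?_⟩
    · intro x
      rw [hσf, hτf, hτf, hσf]
    · intro x
      rw [hσf, hτf]
      ring
  · push_neg at hm
    obtain ⟨a, b, hab⟩ := hm
    have hab' : f (a * b) - f a * f b ≠ 0 := sub_ne_zero.mpr hab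
    have hbb : f (b * b) - f b * f b ≠ 0 := by
      intro h0
      have h := R1 a b a b
      rw [h0, mul_zero] at h
      exact hab' (mul_self_eq_zero.mp h)
    obtain ⟨c, hc⟩ := IsAlgClosed.exists_pow_nat_eq (f (b * b) - f b * f b) (n := 2)
      (by norm_num)
    have hcne : c ≠ 0 := by
      intro h0
      rw [h0] at hc
      norm_num at hc
      exact hbb hc.symm
    set g : M → ℂ := fun x => (f (x * b) - f x * f b) / c with hgdef
    have hgb : g b = c := by
      simp only [hgdef]
      rw [← hc]
      field_simp
    have hgg : ∀ x y : M, f (x * y) - f x * f y = g x * g y := by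
      intro x y
      simp only [hgdef]
      rw [div_mul_div_comm, eq_div_iff (mul_ne_zero hcne hcne)]
      have h1 := R1 x y b b
      linear_combination h1 + (f (x * y) - f x * f y) * hc
    have hfadd : ∀ x y : M, f (x * y) = f x * f y + g x * g y := by
      intro x y
      linear_combination hgg x y
    have hgsine : ∀ x y : M, g (x * y) = g x * f y + f x * g y := by
      intro x y
      have h := Sstar x y b
      simp only [hgdef]
      field_simp
      linear_combination h
    -- g(σx)g(σy) = g(x)g(y)
    have hgσ2 : ∀ x y : M, g (σ x) * g (σ y) = g x * g y := by
      intro x y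
      have h1 := hgg (σ x) (σ y)
      rw [← hσmul, hσf, hσf, hσf] at h1
      have h2 := hgg x y
      linear_combination -h1 + h2
    -- g(τ y) = - g(σ y)
    have hστ : ∀ x y : M, g x * (g (σ y) + g (τ y)) = 0 := by
      intro x y
      have h := fE x y
      have h1 := hfadd x (σ y)
      have h2 := hfadd x (τ y)
      linear_combination h - h1 - h2 - f x * (hσf y) - f x * (hτf y)
    have hgτy : ∀ y : M, g (τ y) = - g (σ y) := by
      intro y
      have h := hστ b y
      rw [hgb] at h
      rcases mul_eq_zero.mp h with h' | h'
      · exact absurd h' hcne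
      · linear_combination h'
    rcases mul_self_eq_mul_self_iff.mp (by rw [hgσ2 b b, hgb] : g (σ b) * g (σ b) = c * c)
      with hσb | hσb
    · -- g ∘ σ = g
      have hσg : ∀ x : M, g (σ x) = g x := by
        intro x
        have h := hgσ2 x b
        rw [hσb, hgb] at h
        exact mul_right_cancel₀ hcne h
      have hτg : ∀ x : M, g (τ x) = - g x := by
        intro x
        rw [hgτy x, hσg x]
      refine ⟨fun x => f x + g x, ?_, ?_, Or.inl ?_, ?_⟩
      · intro x y
        show f (x * y) + g (x * y) = (f x + g x) * (f y + g y)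
        rw [hfadd x y, hgsine x y]
        ring
      · intro x
        show f (σ (τ x)) + g (σ (τ x)) = f (τ (σ x)) + g (τ (σ x))
        simp only [hσf, hτf, hσg, hτg]
      · intro x
        show f (σ x) + g (σ x) = f x + g x
        simp only [hσf, hσg]
      · intro x
        show f x = (f x + g x + (f (σ (τ x)) + g (σ (τ x)))) / 2
        simp only [hσf, hτf, hσg, hτg]
        ring
    · -- g ∘ σ = -g
      have hσg : ∀ x : M, g (σ x) = - g x := by
        intro x
        have h := hgσ2 x b
        rw [hσb, hgb] at h
        have h2 : (-(g (σ x))) * c = g x * c := by linear_combination h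
        have h3 := mul_right_cancel₀ hcne h2
        linear_combination -h3
      have hτg : ∀ x : M, g (τ x) = g x := by
        intro x
        rw [hgτy x, hσg x, neg_neg]
      refine ⟨fun x => f x + g x, ?_, ?_, Or.inr ?_, ?_⟩
      · intro x y
        show f (x * y) + g (x * y) = (f x + g x) * (f y + g y)
        rw [hfadd x y, hgsine x y]
        ring
      · intro x
        show f (σ (τ x)) + g (σ (τ x)) = f (τ (σ x)) + g (τ (σ x))
        simp only [hσf, hτf, hσg, hτg]
      · intro x
        show f (τ x) + g (τ x) = f x + g x
        simp only [hτf, hτg]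
      · intro x
        show f x = (f x + g x + (f (σ (τ x)) + g (σ (τ x)))) / 2
        simp only [hσf, hτf, hσg, hτg]
        ring
end

section
/- Let χ : M → ℂ be a multiplicative function (χ(xy) = χ(x)χ(y) for all x, y ∈ M) such that χ∘σ∘τ = χ∘τ∘σ and such that χ∘σ = χ or χ∘τ = χ. Then the function f = (χ + χ∘σ∘τ)/2 is an abelian solution of the functional equation f(xσ(y)) + f(τ(y)x) = 2f(x)f(y) for all x, y ∈ M. -/
lemma mul_fn_list_prod {M : Type*} [Monoid M] (g : M → ℂ)
    (hg : ∀ x y : M, g (x * y) = g x * g y) :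
    ∀ l : List M, l ≠ [] → g l.prod = (l.map g).prod := by
  intro l
  induction l with
  | nil => simp
  | cons a t ih =>
    intro _
    rcases eq_or_ne t [] with rfl | ht
    · simp
    · simp [hg, ih ht]

theorem stmt6 {M : Type*} [Monoid M] (σ τ : M → M)
    (hσmul : ∀ x y : M, σ (x * y) = σ x * σ y) (hσinv : ∀ x : M, σ (σ x) = x)
    (hτmul : ∀ x y : M, τ (x * y) = τ y * τ x) (hτinv : ∀ x : M, τ (τ x) = x)
    (χ : M → ℂ) (hχmul : ∀ x y : M, χ (x * y) = χ x * χ y)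
    (hcomm : ∀ x : M, χ (σ (τ x)) = χ (τ (σ x)))
    (heven : (∀ x : M, χ (σ x) = χ x) ∨ (∀ x : M, χ (τ x) = χ x))
    (f : M → ℂ) (hfdef : ∀ x : M, f x = (χ x + χ (σ (τ x))) / 2) :
    IsAbelianFn f ∧ ∀ x y : M, f (x * σ y) + f (τ y * x) = 2 * f x * f y := by
  have hgmul : ∀ x y : M, χ (σ (τ (x * y))) = χ (σ (τ x)) * χ (σ (τ y)) := by
    intro x y
    rw [hτmul, hσmul, hχmul, mul_comm]
  constructor
  · intro n hn x ε
    have hne : ∀ y : Fin n → M, List.ofFn y ≠ [] := by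
      intro y h
      rw [List.ofFn_eq_nil_iff] at h
      omega
    have key : ∀ (g : M → ℂ), (∀ a b : M, g (a * b) = g a * g b) →
        g (List.ofFn x).prod = g (List.ofFn (x ∘ ε)).prod := by
      intro g hg
      rw [mul_fn_list_prod g hg _ (hne x), mul_fn_list_prod g hg _ (hne (x ∘ ε)),
        List.map_ofFn, List.map_ofFn, List.prod_ofFn, List.prod_ofFn]
      exact (Equiv.prod_comp ε (fun i => g (x i))).symm
    rw [hfdef, hfdef, key χ hχmul, key (fun z => χ (σ (τ z))) hgmul]
  · intro x y
    rw [hfdef, hfdef, hfdef, hfdef, hχmul, hχmul, hgmul, hgmul]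
    have h4 : χ (σ (τ (τ y))) = χ (σ y) := by rw [hτinv]
    rw [h4]
    rcases heven with h | h
    · have e1 : χ (σ y) = χ y := h y
      have e2 : χ (σ (τ (σ y))) = χ (σ (τ y)) := by
        rw [h (τ (σ y)), ← hcomm y]
      have e3 : χ (τ y) = χ (σ (τ y)) := (h (τ y)).symm
      rw [e1, e2, e3]; ring
    · have e2 : χ (σ (τ (σ y))) = χ y := by
        rw [hcomm (σ y), hσinv, h y]
      have e3 : χ (τ y) = χ y := h y
      have e4 : χ (σ (τ y)) = χ (σ y) := by
        rw [hcomm y, h (σ y)]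
      rw [e2, e3, e4]; ring
end

section
/- Let f : G → ℂ be a non-zero solution of the functional equation f(y⁻¹xz₀) − f(xσ(y)z₀) = 2f(x)f(y) for all x, y ∈ G. Then (1) f(e) = 0; (2) f(y⁻¹z₀) = f(σ(y)z₀) for all y ∈ G; and (3) f(y⁻¹) = −f(σ(y)) for all y ∈ G. -/
theorem stmt12 {G : Type*} [Group G] (σ : G → G)
    (hσmul : ∀ x y : G, σ (x * y) = σ x * σ y) (hσinv : ∀ x : G, σ (σ x) = x)
    (z₀ : G) (hz₀ : z₀ ∈ Subgroup.center G)
    (f : G → ℂ) (hf : f ≠ 0)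
    (heq : ∀ x y : G, f (y⁻¹ * x * z₀) - f (x * σ y * z₀) = 2 * f x * f y) :
    f 1 = 0 ∧ (∀ y : G, f (y⁻¹ * z₀) = f (σ y * z₀)) ∧
      (∀ y : G, f y⁻¹ = - f (σ y)) := by
  have hσ1 : σ 1 = 1 := by
    have h := hσmul 1 1
    rw [mul_one] at h
    exact left_eq_mul.mp h
  have hσi : ∀ x : G, σ x⁻¹ = (σ x)⁻¹ := by
    intro x
    have h := hσmul x⁻¹ x
    rw [inv_mul_cancel, hσ1] at h
    exact eq_inv_of_mul_eq_one_left h.symm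
  -- (1)
  obtain ⟨x₀, hx₀⟩ := Function.ne_iff.mp hf
  have h1 : f 1 = 0 := by
    have h := heq x₀ 1
    rw [hσ1, inv_one, one_mul, mul_one, sub_self] at h
    rcases mul_eq_zero.mp h.symm with h' | h'
    · rcases mul_eq_zero.mp h' with h'' | h''
      · norm_num at h''
      · exact absurd h'' hx₀
    · exact h'
  -- (2)
  have h2 : ∀ y : G, f (y⁻¹ * z₀) = f (σ y * z₀) := by
    intro y
    have h := heq 1 y
    rw [mul_one, one_mul, h1, mul_zero, zero_mul] at h
    exact sub_eq_zero.mp h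
  -- key : f x + f (σ x)⁻¹ = 0 for all x
  have key : ∀ x : G, f x + f (σ x)⁻¹ = 0 := by
    intro x
    -- Hg : f z₀ - f (x * σ x * z₀) = 2 * f x * f x
    have Hg := heq x x
    rw [show x⁻¹ * x * z₀ = z₀ by group] at Hg
    -- Hf : f (σ x * x * z₀) - f z₀ = 2 * f x * f (σ x)⁻¹
    have Hf := heq x (σ x)⁻¹
    rw [inv_inv, hσi, hσinv, show x * x⁻¹ * z₀ = z₀ by group] at Hf
    -- Hf' : f (x⁻¹ * (σ x)⁻¹ * z₀) - f z₀ = 2 * f (σ x)⁻¹ * f x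
    have Hf' := heq (σ x)⁻¹ x
    rw [show (σ x)⁻¹ * σ x * z₀ = z₀ by group] at Hf'
    -- Hg' : f z₀ - f ((σ x)⁻¹ * x⁻¹ * z₀) = 2 * f (σ x)⁻¹ * f (σ x)⁻¹
    have Hg' := heq (σ x)⁻¹ (σ x)⁻¹
    rw [hσi, hσinv, inv_inv, show σ x * (σ x)⁻¹ * z₀ = z₀ by group] at Hg'
    -- bridge1 : f (x⁻¹ * (σ x)⁻¹ * z₀) = f (x * σ x * z₀)
    have hb1 := h2 (σ x * x)
    rw [hσmul, hσinv, show (σ x * x)⁻¹ * z₀ = x⁻¹ * (σ x)⁻¹ * z₀ by group] at hb1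
    -- bridge2 : f ((σ x)⁻¹ * x⁻¹ * z₀) = f (σ x * x * z₀)
    have hb2 := h2 (x * σ x)
    rw [hσmul, hσinv, show (x * σ x)⁻¹ * z₀ = (σ x)⁻¹ * x⁻¹ * z₀ by group] at hb2
    rw [hb1] at Hf'
    rw [hb2] at Hg'
    have hsq : (f x + f (σ x)⁻¹) ^ 2 = 0 := by linear_combination -Hg / 2 - Hf' / 2 - Hf / 2 - Hg' / 2
    exact pow_eq_zero_iff (by norm_num) |>.mp hsq
  refine ⟨h1, h2, fun y => ?_⟩
  have := key (σ y)
  rw [hσinv] at this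
  linear_combination this
end

section
/- Let f : G → ℂ be a non-zero solution of the functional equation f(y⁻¹xz₀) − f(xσ(y)z₀) = 2f(x)f(y) for all x, y ∈ G. Then (1) f(yσ(z₀)z₀) = −f(y) for all y ∈ G; (2) f(σ(z₀)z₀) = 0; (3) f(z₀) = 1; and (4) f(z₀²) = 0. -/
theorem stmt13 {G : Type*} [Group G] (σ : G → G)
    (hσmul : ∀ x y : G, σ (x * y) = σ x * σ y) (hσinv : ∀ x : G, σ (σ x) = x)
    (z₀ : G) (hz₀ : z₀ ∈ Subgroup.center G)
    (f : G → ℂ) (hf : f ≠ 0)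
    (heq : ∀ x y : G, f (y⁻¹ * x * z₀) - f (x * σ y * z₀) = 2 * f x * f y) :
    (∀ y : G, f (y * σ z₀ * z₀) = - f y) ∧ f (σ z₀ * z₀) = 0 ∧
      f z₀ = 1 ∧ f (z₀ ^ 2) = 0 := by
  obtain ⟨x₀, hx₀⟩ := Function.ne_iff.mp hf
  simp only [Pi.zero_apply] at hx₀
  have hzc : ∀ g : G, g * z₀ = z₀ * g := fun g => Subgroup.mem_center_iff.mp hz₀ g
  have hσ1 : σ 1 = 1 := by
    have h := hσmul 1 1
    rw [one_mul] at h
    exact left_eq_mul.mp h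
  have hσi : ∀ x : G, σ x⁻¹ = (σ x)⁻¹ := fun x => by
    have h := hσmul x x⁻¹
    rw [mul_inv_cancel, hσ1] at h
    exact eq_inv_of_mul_eq_one_right h.symm
  have hsc : ∀ g : G, g * σ z₀ = σ z₀ * g := fun g => by
    conv_lhs => rw [← hσinv g]
    rw [← hσmul, hzc, hσmul, hσinv]
  have hsci : ∀ g : G, (σ z₀)⁻¹ * g = g * (σ z₀)⁻¹ := fun g => by
    have h := congrArg (·⁻¹) (hsc g⁻¹)
    simpa [mul_inv_rev] using h
  have hfe : f 1 = 0 := by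
    have h := heq x₀ 1
    rw [inv_one, one_mul, hσ1, mul_one, sub_self] at h
    rcases mul_eq_zero.mp h.symm with h' | h'
    · rcases mul_eq_zero.mp h' with h'' | h''
      · norm_num at h''
      · exact absurd h'' hx₀
    · exact h'
  have hP1 : ∀ y : G, f (y⁻¹ * z₀) = f (σ y * z₀) := fun y => by
    have h := heq 1 y
    rw [mul_one, one_mul, hfe, mul_zero, zero_mul, sub_eq_zero] at h
    exact h
  have hconjz : ∀ w : G, z₀⁻¹ * w * z₀ = w := fun w => by
    rw [mul_assoc, hzc, inv_mul_cancel_left]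
  have hD : ∀ x : G, f (x * σ z₀ * z₀) = (1 - 2 * f z₀) * f x := fun x => by
    have h := heq x z₀
    rw [hconjz] at h
    linear_combination -h
  have h2 : f (σ z₀ * z₀) = 0 := by
    have h := hD 1
    rwa [one_mul, hfe, mul_zero] at h
  have hH : ∀ u : G, f (u * (σ z₀)⁻¹) = (1 - 2 * f z₀) * f (u * z₀) := fun u => by
    have h := heq u (σ z₀ * z₀)
    have e1 : (σ z₀ * z₀)⁻¹ * u * z₀ = u * (σ z₀)⁻¹ := by
      rw [mul_inv_rev, mul_assoc z₀⁻¹ (σ z₀)⁻¹ u, hconjz, hsci]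
    have e2 : u * σ (σ z₀ * z₀) * z₀ = u * z₀ * σ z₀ * z₀ := by
      rw [hσmul, hσinv, ← mul_assoc]
    rw [e1, e2, hD (u * z₀), h2] at h
    linear_combination h
  have hsq : f x₀ = (1 - 2 * f z₀) * ((1 - 2 * f z₀) * f x₀) := by
    have h := hH (x₀ * σ z₀)
    rw [mul_inv_cancel_right, hD x₀] at h
    exact h
  have hc01 : f z₀ = 0 ∨ f z₀ = 1 := by
    have h : (f z₀ * (f z₀ - 1)) * f x₀ = 0 := by linear_combination (-1/4 : ℂ) * hsq
    rcases mul_eq_zero.mp h with h' | h'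
    · rcases mul_eq_zero.mp h' with h'' | h''
      · exact Or.inl h''
      · exact Or.inr (by linear_combination h'')
    · exact absurd h' hx₀
  rcases hc01 with hc0 | hc1
  · exfalso
    have hD1 : ∀ x : G, f (x * σ z₀ * z₀) = f x := fun x => by
      rw [hD, hc0]; ring
    have hH1 : ∀ u : G, f (u * (σ z₀)⁻¹) = f (u * z₀) := fun u => by
      rw [hH, hc0]; ring
    have hK : ∀ x y : G, f (x * z₀) * f y = f x * f (y * σ z₀) := fun x y => by
      have h1 := heq (x * z₀) y
      have h2' := heq x (y * σ z₀)
      have e1 : y⁻¹ * (x * z₀) * z₀ = y⁻¹ * x * z₀ * z₀ := by rw [← mul_assoc]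
      have e2 : x * z₀ * σ y * z₀ = x * σ y * z₀ * z₀ := by
        rw [mul_assoc x z₀ (σ y), ← hzc (σ y), ← mul_assoc]
      have e3 : (y * σ z₀)⁻¹ * x * z₀ = y⁻¹ * x * z₀ * (σ z₀)⁻¹ := by
        simp only [mul_inv_rev, mul_assoc, hsci]
      have e4 : x * σ (y * σ z₀) * z₀ = x * σ y * z₀ * z₀ := by
        rw [hσmul, hσinv, ← mul_assoc]
      rw [e1, e2] at h1
      rw [e3, e4, hH1 (y⁻¹ * x * z₀)] at h2'
      linear_combination (h2' - h1) / 2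
    have hm2 : f (x₀ * σ z₀) * f (x₀ * σ z₀) = f x₀ * f x₀ := by
      have ha := hK (x₀ * σ z₀) x₀
      rw [hD1 x₀] at ha
      linear_combination -ha
    have hmne : f (x₀ * σ z₀) ≠ 0 := by
      intro h0
      have hz : f x₀ * f x₀ = 0 := by rw [← hm2, h0, mul_zero]
      exact hx₀ (mul_self_eq_zero.mp hz)
    have hσf : ∀ y : G, f (σ y) = f y⁻¹ := fun y => by
      have hp := hP1 y
      have ha := hK y⁻¹ x₀
      have hb := hK (σ y) x₀
      apply mul_right_cancel₀ hmne
      linear_combination ha - hb - f x₀ * hp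
    have hJ : ∀ x y : G, (f (y⁻¹ * x) - f (x * σ y)) * f (x₀ * σ z₀)
        = 2 * f x * f y * f x₀ := fun x y => by
      have h := heq x y
      have ha := hK (y⁻¹ * x) x₀
      have hb := hK (x * σ y) x₀
      linear_combination f x₀ * h - ha + hb
    have hkey : f (x₀ * σ x₀) = f (x₀⁻¹ * (σ x₀)⁻¹) := by
      have h := hσf (σ x₀ * x₀)
      rw [hσmul, hσinv, mul_inv_rev] at h
      exact h
    have hfsi : f ((σ x₀)⁻¹) = f x₀ := by
      rw [← hσi, hσf, inv_inv]
    have hJ1 := hJ x₀ x₀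
    rw [inv_mul_cancel, hfe, hkey] at hJ1
    have hJ2 := hJ (σ x₀)⁻¹ x₀
    rw [inv_mul_cancel, hfe, hfsi] at hJ2
    have hcube : f x₀ ^ 3 = 0 := by linear_combination -(hJ1 + hJ2) / 4
    exact hx₀ (by simpa [pow_eq_zero_iff] using hcube)
  · refine ⟨fun y => ?_, h2, hc1, ?_⟩
    · have h := hD y
      rw [hc1] at h
      linear_combination h
    · have h := heq 1 z₀⁻¹
      rw [inv_inv, mul_one, one_mul, hfe, hσi, hsci, hH, hc1] at h
      rw [pow_two]
      linear_combination h / 2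
end

section
/- Let f : G → ℂ be a non-zero solution of the functional equation f(y⁻¹xz₀) − f(xσ(y)z₀) = 2f(x)f(y) for all x, y ∈ G. Then f(z₀⁻¹)² = f(σ(z₀))² = 1. -/
theorem stmt14 {G : Type*} [Group G] (σ : G → G)
    (hσmul : ∀ x y : G, σ (x * y) = σ x * σ y) (hσinv : ∀ x : G, σ (σ x) = x)
    (z₀ : G) (hz₀ : z₀ ∈ Subgroup.center G)
    (f : G → ℂ) (hf : f ≠ 0)
    (heq : ∀ x y : G, f (y⁻¹ * x * z₀) - f (x * σ y * z₀) = 2 * f x * f y) :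
    f z₀⁻¹ ^ 2 = 1 ∧ f (σ z₀) ^ 2 = 1 := by
  obtain ⟨a, ha⟩ := Function.ne_iff.mp hf
  have hσ1 : σ 1 = 1 := by
    have h := hσmul 1 1
    rw [one_mul] at h
    have : σ 1 * 1 = σ 1 * σ 1 := by rw [mul_one]; exact h
    exact (mul_left_cancel this).symm
  have hσinv' : ∀ y : G, σ y⁻¹ = (σ y)⁻¹ := by
    intro y
    apply eq_inv_of_mul_eq_one_left
    rw [← hσmul, inv_mul_cancel, hσ1]
  have hcen : ∀ g : G, g * z₀ = z₀ * g := fun g => Subgroup.mem_center_iff.mp hz₀ g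
  have f1 : f 1 = 0 := by
    have h := heq a 1
    rw [hσ1] at h
    simp only [inv_one, one_mul, mul_one, sub_self] at h
    rcases mul_eq_zero.mp h.symm with h' | h'
    · rcases mul_eq_zero.mp h' with h'' | h''
      · norm_num at h''
      · exact absurd h'' ha
    · exact h'
  have star : ∀ y : G, f (y⁻¹ * z₀) = f (σ y * z₀) := by
    intro y
    have h := heq 1 y
    rw [f1] at h
    simp only [mul_one, one_mul, mul_zero, zero_mul] at h
    exact sub_eq_zero.mp h
  set c : ℂ := f z₀⁻¹ with hcdef
  have A : ∀ y : G, f y⁻¹ - f (σ y) = 2 * c * f y := by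
    intro y
    have h := heq z₀⁻¹ y
    have e1 : y⁻¹ * z₀⁻¹ * z₀ = y⁻¹ := by group
    have e2 : z₀⁻¹ * σ y * z₀ = σ y := by
      rw [mul_assoc, hcen (σ y), ← mul_assoc, inv_mul_cancel, one_mul]
    rw [e1, e2] at h
    exact h
  have Asym : ∀ y : G, 2 * c * (f (σ y) + f y⁻¹) = 0 := by
    intro y
    have A1 := A (σ y)
    rw [hσinv] at A1
    have A2 := A y⁻¹
    rw [inv_inv, hσinv'] at A2
    linear_combination -A1 - A2
  by_cases hc : c = 0
  · exfalso
    have key : ∀ y : G, f y⁻¹ = f (σ y) := by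
      intro y
      have h := A y
      rw [hc] at h
      simpa [sub_eq_zero] using h
    have prod : ∀ y : G, f y * f y⁻¹ = 0 := by
      intro y
      have h1 := heq y⁻¹ y
      have h2 := heq (σ y) y
      have h3 := star (y * y)
      simp only [mul_inv_rev, hσmul, mul_assoc] at h1 h2 h3
      linear_combination (h3 - h1 - h2) / 4 + (f y) / 2 * key y
    have fainv : f a⁻¹ = 0 := by
      rcases mul_eq_zero.mp (prod a) with h | h
      · exact absurd h ha
      · exact h
    have h4 := heq a⁻¹ a⁻¹
    rw [fainv, hσinv'] at h4
    simp only [inv_inv, mul_inv_cancel_left, inv_mul_cancel, one_mul, mul_zero, mul_assoc] at h4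
    have h5 := star (σ a * a)
    simp only [mul_inv_rev, hσmul, hσinv, mul_assoc] at h5
    have h6 := heq a a
    simp only [inv_mul_cancel, one_mul, mul_assoc] at h6
    have : f a * f a = 0 := by linear_combination (h4 + h5 - h6) / 2
    exact ha (mul_self_eq_zero.mp this)
  · have hodd : ∀ y : G, f (σ y) = - f y⁻¹ := by
      intro y
      have h := Asym y
      have h2 : f (σ y) + f y⁻¹ = 0 := by
        rcases mul_eq_zero.mp h with h' | h'
        · rcases mul_eq_zero.mp h' with h'' | h''
          · norm_num at h''
          · exact absurd h'' hc
        · exact h'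
      exact eq_neg_of_add_eq_zero_left h2
    have hinv : ∀ y : G, f y⁻¹ = c * f y := by
      intro y
      have h := A y
      rw [hodd y] at h
      linear_combination h / 2
    have hsq : c ^ 2 = 1 := by
      have h1 : f a = c * (c * f a) := by
        have := hinv a⁻¹
        rw [inv_inv, hinv a] at this
        exact this
      have h2 : (c ^ 2 - 1) * f a = 0 := by ring_nf; linear_combination -h1
      rcases mul_eq_zero.mp h2 with h | h
      · exact sub_eq_zero.mp h
      · exact absurd h ha
    constructor
    · exact hsq
    · rw [hodd z₀]
      rw [neg_pow, ← hcdef]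
      simpa using hsq
end

section
/- Let f : G → ℂ be a non-zero solution of the functional equation f(y⁻¹xz₀) − f(xσ(y)z₀) = 2f(x)f(y) for all x, y ∈ G. Then f(z₀³) = f(z₀⁻¹) = −f(σ(z₀)). -/
theorem stmt15 {G : Type*} [Group G] (σ : G → G)
    (hσmul : ∀ x y : G, σ (x * y) = σ x * σ y) (hσinv : ∀ x : G, σ (σ x) = x)
    (z₀ : G) (hz₀ : z₀ ∈ Subgroup.center G)
    (f : G → ℂ) (hf : f ≠ 0)
    (heq : ∀ x y : G, f (y⁻¹ * x * z₀) - f (x * σ y * z₀) = 2 * f x * f y) :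
    f (z₀ ^ 3) = f z₀⁻¹ ∧ f z₀⁻¹ = - f (σ z₀) := by
  have hc : ∀ g : G, g * z₀ = z₀ * g := fun g => Subgroup.mem_center_iff.mp hz₀ g
  obtain ⟨y₀, hy₀⟩ : ∃ y, f y ≠ 0 := by
    by_contra h
    push_neg at h
    exact hf (funext fun x => h x)
  have hσe : σ 1 = 1 := by
    have h := hσmul 1 1
    rw [one_mul] at h
    exact left_eq_mul.mp h
  have hfe : f 1 = 0 := by
    have h := heq y₀ 1
    rw [hσe, inv_one, one_mul, mul_one] at h
    -- h : f (y₀ * z₀) - f (y₀ * z₀) = 2 * f y₀ * f 1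
    have h2 : 2 * f y₀ * f 1 = 0 := by linear_combination -h
    rcases mul_eq_zero.mp h2 with h3 | h3
    · rcases mul_eq_zero.mp h3 with h4 | h4
      · norm_num at h4
      · exact absurd h4 hy₀
    · exact h3
  have hσi : ∀ x : G, σ x⁻¹ = (σ x)⁻¹ := fun x => by
    have h := hσmul x x⁻¹
    rw [mul_inv_cancel, hσe] at h
    exact eq_inv_of_mul_eq_one_right h.symm
  have star : ∀ w : G, f (w⁻¹ * z₀) = f (σ w * z₀) := fun w => by
    have h := heq 1 w
    rw [mul_one, one_mul, hfe] at h
    linear_combination h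
  have hodd : ∀ x : G, f ((σ x)⁻¹) = - f x := fun x => by
    have h1 := heq x y₀
    have h2 := heq ((σ x)⁻¹) y₀
    have e1 : f (y₀⁻¹ * x * z₀) = f ((σ x)⁻¹ * σ y₀ * z₀) := by
      have h := star (x⁻¹ * y₀)
      rw [mul_inv_rev, inv_inv, hσmul, hσi] at h
      exact h
    have e2 : f (x * σ y₀ * z₀) = f (y₀⁻¹ * (σ x)⁻¹ * z₀) := by
      have h := star (σ x * y₀)
      rw [mul_inv_rev, hσmul, hσinv x] at h
      exact h.symm
    rw [e1, e2] at h1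
    have h3 : (f ((σ x)⁻¹) + f x) * f y₀ = 0 := by linear_combination -(h1 + h2) / 2
    rcases mul_eq_zero.mp h3 with h4 | h4
    · linear_combination h4
    · exact absurd h4 hy₀
  have hfσz : f (σ z₀) = - f z₀⁻¹ := by
    have h := hodd z₀⁻¹
    rw [hσi, inv_inv] at h
    exact h
  -- f z₀ is idempotent
  have h3 := heq ((σ z₀)⁻¹) z₀
  have c1 : z₀⁻¹ * (σ z₀)⁻¹ * z₀ = (σ z₀)⁻¹ := by
    rw [mul_assoc, hc, ← mul_assoc, inv_mul_cancel, one_mul]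
  have c2 : (σ z₀)⁻¹ * σ z₀ * z₀ = z₀ := by rw [inv_mul_cancel, one_mul]
  rw [c1, c2, hodd z₀] at h3
  have ha : f z₀ * f z₀ = f z₀ := by linear_combination h3 / 2
  -- f z₀⁻¹ squared
  have h4 := heq z₀⁻¹ z₀⁻¹
  have c3 : (z₀⁻¹)⁻¹ * z₀⁻¹ * z₀ = z₀ := by group
  have c4 : z₀⁻¹ * σ z₀⁻¹ * z₀ = (σ z₀)⁻¹ := by
    rw [hσi, mul_assoc, hc, ← mul_assoc, inv_mul_cancel, one_mul]
  rw [c3, c4, hodd z₀] at h4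
  have hb : f z₀⁻¹ * f z₀⁻¹ = f z₀ := by linear_combination -(h4 / 2)
  -- F
  have hF : ∀ x : G, f (x * σ z₀ * z₀) = f x - 2 * f x * f z₀ := fun x => by
    have h := heq x z₀
    have c : z₀⁻¹ * x * z₀ = x := by rw [mul_assoc, hc, ← mul_assoc, inv_mul_cancel, one_mul]
    rw [c] at h
    linear_combination -h
  have hp : z₀ ^ 3 = z₀ * z₀ * z₀ := by rw [pow_succ, pow_two]
  have hcase : f z₀ = 0 ∨ f z₀ = 1 := by
    have h : f z₀ * (f z₀ - 1) = 0 := by linear_combination ha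
    rcases mul_eq_zero.mp h with h | h
    · exact Or.inl h
    · exact Or.inr (by linear_combination h)
  refine ⟨?_, by linear_combination hfσz⟩
  rw [hp]
  rcases hcase with ha0 | ha1
  · -- case f z₀ = 0
    have hb0 : f z₀⁻¹ = 0 := by
      have h := hb
      rw [ha0] at h
      exact mul_self_eq_zero.mp h
    have hF0 : ∀ x : G, f (x * σ z₀ * z₀) = f x := fun x => by
      rw [hF x, ha0]; ring
    have hP : ∀ x y : G, f (x * z₀⁻¹) * f y = f x * f (y * z₀) := fun x y => by
      have hI := heq (x * z₀⁻¹) y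
      have cI1 : y⁻¹ * (x * z₀⁻¹) * z₀ = y⁻¹ * x := by group
      have cI2 : x * z₀⁻¹ * σ y * z₀ = x * σ y := by
        rw [mul_assoc (x * z₀⁻¹) (σ y) z₀, hc, ← mul_assoc, mul_assoc x z₀⁻¹ z₀,
          inv_mul_cancel, mul_one]
      rw [cI1, cI2] at hI
      have hH := heq x (y * z₀)
      have cH1 : (y * z₀)⁻¹ * x * z₀ = y⁻¹ * x := by
        rw [mul_inv_rev, mul_assoc z₀⁻¹ y⁻¹ x, mul_assoc z₀⁻¹ (y⁻¹ * x) z₀, hc,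
          ← mul_assoc, inv_mul_cancel, one_mul]
      have cH2 : x * σ (y * z₀) * z₀ = x * σ y * σ z₀ * z₀ := by
        rw [hσmul, ← mul_assoc]
      rw [cH1, cH2, hF0 (x * σ y)] at hH
      linear_combination (hH - hI) / 2
    by_cases hr : f (y₀ * z₀) = 0
    · exfalso
      have h := hP (y₀ * z₀) y₀
      have c : y₀ * z₀ * z₀⁻¹ = y₀ := by group
      rw [c, hr, mul_zero] at h
      exact hy₀ (mul_self_eq_zero.mp h)
    · have h1 := hP (z₀ * z₀) y₀
      have c1' : z₀ * z₀ * z₀⁻¹ = z₀ := by group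
      rw [c1', ha0, zero_mul] at h1
      have hz2 : f (z₀ * z₀) = 0 := by
        rcases mul_eq_zero.mp h1.symm with h | h
        · exact h
        · exact absurd h hr
      have h2 := hP (z₀ * z₀ * z₀) y₀
      have c2' : z₀ * z₀ * z₀ * z₀⁻¹ = z₀ * z₀ := by group
      rw [c2', hz2, zero_mul] at h2
      have hz3 : f (z₀ * z₀ * z₀) = 0 := by
        rcases mul_eq_zero.mp h2.symm with h | h
        · exact h
        · exact absurd h hr
      rw [hz3, hb0]
  · -- case f z₀ = 1
    have hA := heq z₀ z₀⁻¹
    have c5 : (z₀⁻¹)⁻¹ * z₀ * z₀ = z₀ * z₀ * z₀ := by group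
    rw [c5, hσi] at hA
    have hT := hF (z₀ * (σ z₀)⁻¹ * z₀)
    have c6 : z₀ * (σ z₀)⁻¹ * z₀ * σ z₀ * z₀ = z₀ * z₀ * z₀ := by
      rw [mul_assoc (z₀ * (σ z₀)⁻¹) z₀ (σ z₀), ← hc (σ z₀), ← mul_assoc,
        mul_assoc z₀ (σ z₀)⁻¹ (σ z₀), inv_mul_cancel, mul_one]
    rw [c6] at hT
    rw [ha1] at hA hT
    linear_combination (hA + hT) / 2
end

section
/- Suppose σ(z₀)z₀ = e. Then the only solution f : G → ℂ of the functional equation f(y⁻¹xz₀) − f(xσ(y)z₀) = 2f(x)f(y) for all x, y ∈ G is f = 0. -/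
theorem stmt16 {G : Type*} [Group G] (σ : G → G)
    (hσmul : ∀ x y : G, σ (x * y) = σ x * σ y) (hσinv : ∀ x : G, σ (σ x) = x)
    (z₀ : G) (hz₀ : z₀ ∈ Subgroup.center G) (hz : σ z₀ * z₀ = 1)
    (f : G → ℂ)
    (heq : ∀ x y : G, f (y⁻¹ * x * z₀) - f (x * σ y * z₀) = 2 * f x * f y) :
    f = 0 := by
  have hc : ∀ g : G, g * z₀ = z₀ * g := fun g => Subgroup.mem_center_iff.mp hz₀ g
  have hσ1 : σ 1 = 1 := by
    have h : σ 1 * 1 = σ 1 * σ 1 := by rw [mul_one, ← hσmul, mul_one]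
    exact (mul_left_cancel h).symm
  have hσi : ∀ x : G, σ x⁻¹ = (σ x)⁻¹ := by
    intro x
    have h : σ x * σ x⁻¹ = 1 := by rw [← hσmul, mul_inv_cancel, hσ1]
    exact eq_inv_of_mul_eq_one_right h |>.symm ▸
      (inv_eq_of_mul_eq_one_right h).symm
  have hσz : σ z₀ = z₀⁻¹ := eq_inv_of_mul_eq_one_left hz
  -- f 1 = 0
  have hf1 : f 1 = 0 := by
    have h := heq 1 1
    rw [hσ1] at h
    simp only [inv_one, one_mul, mul_one, sub_self] at h
    exact mul_self_eq_zero.mp (by linear_combination -h / 2)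
  -- f (σ y * z₀) = f (y⁻¹ * z₀)
  have h1 : ∀ y : G, f (σ y * z₀) = f (y⁻¹ * z₀) := by
    intro y
    have h := heq 1 y
    rw [hf1] at h
    simp only [mul_one, one_mul, mul_zero] at h
    exact (sub_eq_zero.mp (by linear_combination h)).symm
  -- key: f w = f (σ w⁻¹)
  have hf : ∀ w : G, f w = f (σ w⁻¹) := by
    intro w
    have h := h1 (σ (w * z₀⁻¹))
    rw [hσinv] at h
    have e1 : w * z₀⁻¹ * z₀ = w := by group
    have e2 : σ (w * z₀⁻¹) = σ w * z₀ := by rw [hσmul, hσi, hσz, inv_inv]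
    rw [e1, e2] at h
    have e3 : (σ w * z₀)⁻¹ * z₀ = σ w⁻¹ := by
      rw [mul_inv_rev, mul_assoc, hc ((σ w)⁻¹), ← mul_assoc, inv_mul_cancel,
        one_mul, hσi]
    rw [e3] at h
    exact h
  -- main argument
  funext x
  show f x = 0
  have key : ∀ y : G, f x * f y = 0 := by
    intro y
    have h2 := heq x y
    have h3 := heq (σ x⁻¹) y
    -- rewrite f (y⁻¹ * x * z₀) = f (σ x⁻¹ * σ y * z₀)
    have hA : f (y⁻¹ * x * z₀) = f (σ x⁻¹ * σ y * z₀) := by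
      rw [hf (y⁻¹ * x * z₀)]
      congr 1
      have e : (y⁻¹ * x * z₀)⁻¹ = z₀⁻¹ * x⁻¹ * y := by group
      rw [e, hσmul, hσmul, hσi, hσz, inv_inv]
      rw [mul_assoc, mul_assoc, ← hc (σ x⁻¹ * σ y)]
      rw [mul_assoc]
    -- rewrite f (x * σ y * z₀) = f (y⁻¹ * σ x⁻¹ * z₀)
    have hB : f (x * σ y * z₀) = f (y⁻¹ * σ x⁻¹ * z₀) := by
      rw [hf (x * σ y * z₀)]
      congr 1
      have e : (x * σ y * z₀)⁻¹ = z₀⁻¹ * (σ y)⁻¹ * x⁻¹ := by group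
      rw [e, hσmul, hσmul, hσi, hσz, inv_inv, ← hσi, hσinv]
      rw [mul_assoc, mul_assoc, ← hc (y⁻¹ * σ x⁻¹)]
      rw [mul_assoc]
    rw [hA, hB] at h2
    rw [← hf x] at h3
    -- h2 : A - B = 2 f x f y ; h3 : B - A = 2 f x f y
    linear_combination -(h2 + h3) / 4
  exact mul_self_eq_zero.mp (key x)
end

section
/- Suppose σ(z₀)z₀ ≠ e, and let f : G → ℂ be a non-zero continuous solution of the functional equation f(y⁻¹xz₀) − f(xσ(y)z₀) = 2f(x)f(y) for all x, y ∈ G. Then there exists a continuous multiplicative function χ : G → ℂ* such that either (a) χ∘σ = χ, χ(z₀)² = −1 and f(x) = (χ(x) − χ(x⁻¹))/(2χ(z₀)) for all x ∈ G, or (b) χ(x) = χ(x⁻¹) for all x ∈ G, χ(σ(z₀)z₀) = −1 and f(x) = (χ(x) − χ(σ(x)))/(2χ(z₀)) for all x ∈ G. -/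
theorem stmt17 {G : Type*} [Group G] [TopologicalSpace G] [IsTopologicalGroup G] (σ : G → G)
    (hσcont : Continuous σ)
    (hσmul : ∀ x y : G, σ (x * y) = σ x * σ y) (hσinv : ∀ x : G, σ (σ x) = x)
    (z₀ : G) (hz₀ : z₀ ∈ Subgroup.center G) (hz : σ z₀ * z₀ ≠ 1)
    (f : G → ℂ) (hf : f ≠ 0) (hfcont : Continuous f)
    (heq : ∀ x y : G, f (y⁻¹ * x * z₀) - f (x * σ y * z₀) = 2 * f x * f y) :
    ∃ χ : G → ℂ, Continuous χ ∧ (∀ x : G, χ x ≠ 0) ∧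
      (∀ x y : G, χ (x * y) = χ x * χ y) ∧
      (((∀ x : G, χ (σ x) = χ x) ∧ χ z₀ ^ 2 = -1 ∧
          (∀ x : G, f x = (χ x - χ x⁻¹) / (2 * χ z₀))) ∨
        ((∀ x : G, χ x = χ x⁻¹) ∧ χ (σ z₀ * z₀) = -1 ∧
          (∀ x : G, f x = (χ x - χ (σ x)) / (2 * χ z₀)))) := by
  obtain ⟨x₀, hx₀⟩ : ∃ x, f x ≠ 0 := by
    rcases Function.ne_iff.mp hf with ⟨x, hx⟩
    exact ⟨x, by simpa using hx⟩
  have cz : ∀ g : G, g * z₀ = z₀ * g := Subgroup.mem_center_iff.mp hz₀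
  have hσ1 : σ 1 = 1 := by
    have h := hσmul 1 1
    rw [one_mul] at h
    exact (left_eq_mul.mp h)
  have hσi : ∀ u : G, σ u⁻¹ = (σ u)⁻¹ := by
    intro u
    have h : σ u⁻¹ * σ u = 1 := by rw [← hσmul, inv_mul_cancel, hσ1]
    exact eq_inv_of_mul_eq_one_left h
  have cσ : ∀ g : G, g * σ z₀ = σ z₀ * g := by
    intro g
    calc g * σ z₀ = σ (σ g) * σ z₀ := by rw [hσinv]
      _ = σ (σ g * z₀) := (hσmul _ _).symm
      _ = σ (z₀ * σ g) := by rw [cz (σ g)]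
      _ = σ z₀ * σ (σ g) := hσmul _ _
      _ = σ z₀ * g := by rw [hσinv]
  have czi : ∀ g : G, g * z₀⁻¹ = z₀⁻¹ * g := by
    intro g
    have h : Commute g z₀ := cz g
    exact h.inv_right
  have cσi : ∀ g : G, g * (σ z₀)⁻¹ = (σ z₀)⁻¹ * g := by
    intro g
    have h : Commute g (σ z₀) := cσ g
    exact h.inv_right
  have cw : ∀ g : G, g * (σ z₀ * z₀) = (σ z₀ * z₀) * g := by
    intro g
    rw [← mul_assoc, cσ g, mul_assoc, cz g, ← mul_assoc]
  have cwi : ∀ g : G, g * (σ z₀ * z₀)⁻¹ = (σ z₀ * z₀)⁻¹ * g := by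
    intro g
    have h : Commute g (σ z₀ * z₀) := cw g
    exact h.inv_right
  have hconj : ∀ u : G, z₀⁻¹ * u * z₀ = u := by
    intro u
    rw [mul_assoc, cz u, inv_mul_cancel_left]
  -- f 1 = 0
  have hfe : f 1 = 0 := by
    have h := heq x₀ 1
    rw [hσ1, inv_one, one_mul, mul_one, sub_self] at h
    rcases mul_eq_zero.mp h.symm with h' | h'
    · rcases mul_eq_zero.mp h' with h'' | h''
      · norm_num at h''
      · exact absurd h'' hx₀
    · exact h'
  -- L2 : a(σ y) = a(y⁻¹)
  have hL2 : ∀ y : G, f (σ y * z₀) = f (y⁻¹ * z₀) := by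
    intro y
    have h := heq 1 y
    rw [mul_one, one_mul, hfe] at h
    linear_combination -h
  -- multiplication by w := σ z₀ * z₀
  have hw : ∀ x : G, f (x * (σ z₀ * z₀)) = (1 - 2 * f z₀) * f x := by
    intro x
    have h := heq x z₀
    rw [hconj x, mul_assoc x (σ z₀) z₀] at h
    linear_combination -h
  have hσw : σ (σ z₀ * z₀) = σ z₀ * z₀ := by
    rw [hσmul, hσinv]
    exact cσ z₀
  have hfw : f (σ z₀ * z₀) = 0 := by
    have h := hw 1
    rw [one_mul, hfe, mul_zero] at h
    exact h
  -- k² = 1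
  have hk2 : (1 - 2 * f z₀) * (1 - 2 * f z₀) = 1 := by
    have e1 : (σ z₀ * z₀)⁻¹ * (x₀ * z₀⁻¹) * z₀ = x₀ * (σ z₀ * z₀)⁻¹ := by
      calc (σ z₀ * z₀)⁻¹ * (x₀ * z₀⁻¹) * z₀ = (σ z₀ * z₀)⁻¹ * x₀ := by group
        _ = x₀ * (σ z₀ * z₀)⁻¹ := (cwi x₀).symm
    have e2 : x₀ * z₀⁻¹ * (σ z₀ * z₀) * z₀ = x₀ * (σ z₀ * z₀) := by
      calc x₀ * z₀⁻¹ * (σ z₀ * z₀) * z₀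
          = x₀ * z₀⁻¹ * (z₀ * (σ z₀ * z₀)) := by rw [mul_assoc (x₀ * z₀⁻¹), ← cw z₀]
        _ = x₀ * (σ z₀ * z₀) := by group
    have h1 := heq (x₀ * z₀⁻¹) (σ z₀ * z₀)
    rw [hσw, e1, e2, hfw, mul_zero] at h1
    have h2 := hw (x₀ * (σ z₀ * z₀)⁻¹)
    rw [show x₀ * (σ z₀ * z₀)⁻¹ * (σ z₀ * z₀) = x₀ by group] at h2
    have h3 := hw x₀
    have h4 : ((1 - 2 * f z₀) * (1 - 2 * f z₀)) * f x₀ = 1 * f x₀ := by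
      linear_combination (-(1 - 2 * f z₀)) * h1 + (-1 : ℂ) * h2 + (-(1 - 2 * f z₀)) * h3
    exact mul_right_cancel₀ hx₀ h4
  -- f ∘ σ ∘ inv = -f
  have hE1 : ∀ x y : G, f (σ y * x * z₀) - f (x * y⁻¹ * z₀) = 2 * f x * f (σ (y⁻¹)) := by
    intro x y
    have h := heq x (σ (y⁻¹))
    rw [show (σ (y⁻¹))⁻¹ = σ y from by rw [← hσi, inv_inv], hσinv] at h
    exact h
  have hE2 : ∀ x y : G, f (x * y⁻¹ * z₀) - f (σ y * x * z₀)
      = 2 * f (σ (x⁻¹)) * f (σ (y⁻¹)) := by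
    intro x y
    have h := heq (σ (x⁻¹)) (σ (y⁻¹))
    rw [show (σ (y⁻¹))⁻¹ = σ y from by rw [← hσi, inv_inv]] at h
    rw [show σ y * σ (x⁻¹) = σ (y * x⁻¹) from (hσmul _ _).symm] at h
    rw [hL2 (y * x⁻¹)] at h
    rw [show (y * x⁻¹)⁻¹ * z₀ = x * y⁻¹ * z₀ from by group] at h
    rw [show σ (x⁻¹) * σ (σ (y⁻¹)) = σ (x⁻¹ * σ (y⁻¹)) from (hσmul _ _).symm] at h
    rw [hL2 (x⁻¹ * σ (y⁻¹))] at h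
    rw [show (x⁻¹ * σ (y⁻¹))⁻¹ * z₀ = (σ (y⁻¹))⁻¹ * x * z₀ from by group] at h
    rw [show (σ (y⁻¹))⁻¹ = σ y from by rw [← hσi, inv_inv]] at h
    exact h
  have hkey : ∀ x y : G, f (σ (y⁻¹)) * (f x + f (σ (x⁻¹))) = 0 := by
    intro x y
    linear_combination -(hE1 x y + hE2 x y) / 2
  have hft : ∀ x : G, f (σ (x⁻¹)) = - f x := by
    by_cases hall : ∀ y : G, f (σ (y⁻¹)) = 0
    · exfalso
      have h := hall ((σ x₀)⁻¹)
      rw [inv_inv, hσinv] at h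
      exact hx₀ h
    · push_neg at hall
      obtain ⟨y₁, hy₁⟩ := hall
      intro x
      have h := hkey x y₁
      rcases mul_eq_zero.mp h with h' | h'
      · exact absurd h' hy₁
      · exact eq_neg_of_add_eq_zero_right h'
  have hfσ : ∀ x : G, f (σ x) = - f (x⁻¹) := by
    intro x
    have h := hft x⁻¹
    rwa [inv_inv] at h
  -- k = -1, i.e. f z₀ = 1
  have hB : ∀ v : G, f (v * (σ z₀)⁻¹) = (1 - 2 * f z₀) * f (v * z₀) := by
    intro v
    have h := hw (v * (σ z₀)⁻¹)
    rw [show v * (σ z₀)⁻¹ * (σ z₀ * z₀) = v * z₀ by group] at h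
    linear_combination (-(1 - 2 * f z₀)) * h + (-(f (v * (σ z₀)⁻¹))) * hk2
  have hA : ∀ u : G, f (σ ((u * z₀)⁻¹)) = (1 - 2 * f z₀) * f (u * z₀) := by
    intro u
    rw [show σ ((u * z₀)⁻¹) = σ (u⁻¹) * (σ z₀)⁻¹ from by
      rw [mul_inv_rev, hσmul, hσi]; exact (cσi _).symm]
    rw [hB (σ (u⁻¹)), hL2 (u⁻¹), inv_inv]
  have hkm : (1 - 2 * f z₀ : ℂ) = -1 := by
    have h := hA (x₀ * z₀⁻¹)
    rw [show x₀ * z₀⁻¹ * z₀ = x₀ by group] at h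
    rw [hft x₀] at h
    exact mul_right_cancel₀ hx₀ (show (1 - 2 * f z₀) * f x₀ = (-1) * f x₀ by
      linear_combination -h)
  have hfz₀ : f z₀ = 1 := by linear_combination -hkm / 2
  have hww : ∀ x : G, f (x * (σ z₀ * z₀)) = - f x := by
    intro x
    rw [hw x, hkm]
    ring
  -- hCa
  have hCa : ∀ x y : G, f (x⁻¹ * y * z₀) - f (σ x * y * z₀) = 2 * f (x⁻¹) * f (y⁻¹) := by
    intro x y
    have h := heq (σ x) (σ y)
    rw [hσinv y] at h
    rw [show (σ y)⁻¹ * σ x = σ (y⁻¹ * x) from by rw [hσmul, hσi]] at h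
    rw [hL2 (y⁻¹ * x)] at h
    rw [show (y⁻¹ * x)⁻¹ * z₀ = x⁻¹ * y * z₀ from by group] at h
    rw [hfσ x, hfσ y] at h
    linear_combination h
  -- f (x⁻¹) = β f x with β = f (z₀⁻¹)
  have hβ0 : ∀ x : G, f (z₀⁻¹) * f (x⁻¹) = f x := by
    intro x
    have h1 := hCa x z₀
    have h2 := heq z₀ x
    rw [show z₀ * σ x * z₀ = σ x * z₀ * z₀ from by rw [← cz (σ x)]] at h2
    rw [hfz₀] at h2
    linear_combination (h2 - h1) / 2
  have hfinv : ∀ x : G, f (x⁻¹) = f (z₀⁻¹) * f x := by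
    intro x
    have h := hβ0 x⁻¹
    rw [inv_inv] at h
    exact h.symm
  have hβ2 : f (z₀⁻¹) * f (z₀⁻¹) = 1 := by
    have h := hβ0 x₀
    rw [hfinv x₀] at h
    exact mul_right_cancel₀ hx₀ (show (f (z₀⁻¹) * f (z₀⁻¹)) * f x₀ = 1 * f x₀ by
      linear_combination h)
  -- a is central
  have hswap : ∀ x y : G, f (y * σ x * z₀) = f (σ x * y * z₀) := by
    intro x y
    have h1 := hCa x y
    rw [hfinv x, hfinv y] at h1
    have h2 := heq y x
    linear_combination h1 - h2 + 2 * f x * f y * hβ2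
  have hacen : ∀ u v : G, f (u * v * z₀) = f (v * u * z₀) := by
    intro u v
    have h := hswap (σ v) u
    rwa [hσinv] at h
  -- Wilson-type equation
  have hK : ∀ x y : G, f (y⁻¹ * x) + f (x * σ y) = 2 * f x * f (y * z₀) := by
    intro x y
    have h := heq x (y * z₀)
    rw [show (y * z₀)⁻¹ * x * z₀ = z₀⁻¹ * (y⁻¹ * x) * z₀ by group, hconj] at h
    rw [hσmul y z₀] at h
    rw [show x * (σ y * σ z₀) * z₀ = x * σ y * (σ z₀ * z₀) by group] at h
    rw [hww (x * σ y)] at h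
    linear_combination h
  have hSplit1 : ∀ x y : G, f (y⁻¹ * x * z₀) = f (x * z₀) * f (y * z₀) + f x * f y := by
    intro x y
    have h := hK (x * z₀) y
    rw [show y⁻¹ * (x * z₀) = y⁻¹ * x * z₀ by group] at h
    rw [show x * z₀ * σ y = x * σ y * z₀ from by
      rw [mul_assoc x z₀ (σ y), ← cz (σ y), ← mul_assoc]] at h
    linear_combination h / 2 + heq x y / 2
  have heven : ∀ y : G, f (y⁻¹ * z₀) = f (y * z₀) := by
    intro y
    have h := hSplit1 1 y
    rw [mul_one, one_mul, hfe, hfz₀] at h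
    linear_combination h
  have hCos : ∀ x y : G, f (x * y * z₀) = f (x * z₀) * f (y * z₀) + f (z₀⁻¹) * (f x * f y) := by
    intro x y
    have h := hSplit1 x y⁻¹
    rw [inv_inv, heven y, hfinv y] at h
    have e := hacen x y
    linear_combination e + h
  have hxzi : ∀ x : G, f (x * z₀⁻¹) = f (z₀⁻¹) * f (x * z₀) := by
    intro x
    have h := hfinv (z₀ * x⁻¹)
    rw [show (z₀ * x⁻¹)⁻¹ = x * z₀⁻¹ by group] at h
    rw [show z₀ * x⁻¹ = x⁻¹ * z₀ from (cz (x⁻¹)).symm] at h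
    rw [heven x] at h
    exact h
  have hK2 : ∀ x y : G, f (y⁻¹ * x) - f (x * σ y) = 2 * f (z₀⁻¹) * f (x * z₀) * f y := by
    intro x y
    have h := heq (x * z₀⁻¹) y
    rw [show y⁻¹ * (x * z₀⁻¹) * z₀ = y⁻¹ * x by group] at h
    rw [show x * z₀⁻¹ * σ y * z₀ = x * σ y from by
      rw [mul_assoc x z₀⁻¹ (σ y), ← czi (σ y)]; group] at h
    rw [hxzi x] at h
    linear_combination h
  have hD : ∀ x y : G, f (y * x) = f x * f (y * z₀) + f y * f (x * z₀) := by
    intro x y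
    have h1 := hK x y⁻¹
    rw [inv_inv, heven y] at h1
    have h2 := hK2 x y⁻¹
    rw [inv_inv, hfinv y] at h2
    linear_combination h1 / 2 + h2 / 2 + f (x * z₀) * f y * hβ2
  have hSin : ∀ x y : G, f (x * y) = f x * f (y * z₀) + f y * f (x * z₀) := by
    intro x y
    linear_combination hD y x
  have haz : f (z₀ * z₀) = 0 := by
    have h := heven z₀
    rw [inv_mul_cancel, hfe] at h
    exact h.symm
  -- multiplicativity of a + c f when c² = β
  have hmulgen : ∀ c : ℂ, c * c = f (z₀⁻¹) → ∀ x y : G,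
      f (x * y * z₀) + c * f (x * y) = (f (x * z₀) + c * f x) * (f (y * z₀) + c * f y) := by
    intro c hc2 x y
    linear_combination hCos x y + c * hSin x y - f x * f y * hc2
  rcases mul_self_eq_one_iff.mp hβ2 with hβ1 | hβm1
  · -- case (b) : β = 1, c = 1
    have hm := hmulgen 1 (by rw [hβ1]; norm_num)
    have hχ1 : f (1 * z₀) + 1 * f 1 = 1 := by rw [one_mul, hfz₀, hfe]; ring
    refine ⟨fun x => f (x * z₀) + 1 * f x, ?_, ?_, ?_, Or.inr ⟨?_, ?_, ?_⟩⟩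
    · exact ((hfcont.comp (continuous_mul_right z₀)).add (continuous_const.mul hfcont))
    · intro x
      show f (x * z₀) + 1 * f x ≠ 0
      have h := hm x x⁻¹
      rw [mul_inv_cancel] at h
      rw [hχ1] at h
      exact left_ne_zero_of_mul_eq_one h.symm
    · intro x y
      exact hm x y
    · intro x
      show f (x * z₀) + 1 * f x = f (x⁻¹ * z₀) + 1 * f (x⁻¹)
      rw [heven x, hfinv x, hβ1]
      ring
    · show f (σ z₀ * z₀ * z₀) + 1 * f (σ z₀ * z₀) = -1
      have e1 : f (σ z₀ * z₀) + 1 * f (σ z₀) = -1 := by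
        rw [hL2 z₀, inv_mul_cancel, hfe, hfσ z₀, hfinv z₀, hβ1, hfz₀]; ring
      rw [hm (σ z₀) z₀, e1]
      rw [haz, hfz₀]
      ring
    · intro x
      show f x = ((f (x * z₀) + 1 * f x) - (f (σ x * z₀) + 1 * f (σ x))) /
        (2 * (f (z₀ * z₀) + 1 * f z₀))
      rw [hL2 x, heven x, hfσ x, hfinv x, hβ1, haz, hfz₀]
      ring
  · -- case (a) : β = -1, c = I
    have hc2 : Complex.I * Complex.I = f (z₀⁻¹) := by rw [hβm1, Complex.I_mul_I]
    have hm := hmulgen Complex.I hc2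
    have hχ1 : f (1 * z₀) + Complex.I * f 1 = 1 := by rw [one_mul, hfz₀, hfe]; ring
    refine ⟨fun x => f (x * z₀) + Complex.I * f x, ?_, ?_, ?_, Or.inl ⟨?_, ?_, ?_⟩⟩
    · exact ((hfcont.comp (continuous_mul_right z₀)).add (continuous_const.mul hfcont))
    · intro x
      show f (x * z₀) + Complex.I * f x ≠ 0
      have h := hm x x⁻¹
      rw [mul_inv_cancel] at h
      rw [hχ1] at h
      exact left_ne_zero_of_mul_eq_one h.symm
    · intro x y
      exact hm x y
    · intro x
      show f (σ x * z₀) + Complex.I * f (σ x) = f (x * z₀) + Complex.I * f x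
      rw [hL2 x, heven x, hfσ x, hfinv x, hβm1]
      ring
    · show (f (z₀ * z₀) + Complex.I * f z₀) ^ 2 = -1
      rw [haz, hfz₀]
      linear_combination Complex.I_sq
    · intro x
      show f x = ((f (x * z₀) + Complex.I * f x) - (f (x⁻¹ * z₀) + Complex.I * f (x⁻¹))) /
        (2 * (f (z₀ * z₀) + Complex.I * f z₀))
      rw [heven x, hfinv x, hβm1, haz, hfz₀]
      field_simp
      ring
end

section
/- Let f : M → ℂ be a non-zero abelian continuous solution of the functional equation f(xσ(y)z₀) + f(τ(y)xz₀) = 2f(x)f(y) for all x, y ∈ M. Then there exists a continuous multiplicative function χ : M → ℂ such that (i) χ∘σ∘τ = χ∘τ∘σ, (ii) χ∘σ = χ or χ∘τ = χ, (iii) χ(σ(τ(z₀))) = χ(z₀) = f(e), and f = f(e)·(χ + χ∘σ∘τ)/2. -/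
lemma abel2 {M : Type*} [Monoid M] {f : M → ℂ} (h : IsAbelianFn f) :
    ∀ a b : M, f (a * b) = f (b * a) := by
  intro a b
  have := h 2 (by norm_num) ![a, b] (Equiv.swap 0 1)
  have h1 : (List.ofFn ![a, b]).prod = a * b := by simp
  have h2 : (List.ofFn (![a, b] ∘ (Equiv.swap 0 1))).prod = b * a := by
    have : ![a, b] ∘ (Equiv.swap 0 1) = ![b, a] := by
      funext i; fin_cases i <;> simp [Equiv.swap_apply_def]
    rw [this]; simp
  rw [h1, h2] at this; exact this

lemma abel3 {M : Type*} [Monoid M] {f : M → ℂ} (h : IsAbelianFn f) :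
    ∀ a b c : M, f (a * b * c) = f (a * c * b) := by
  intro a b c
  have := h 3 (by norm_num) ![a, b, c] (Equiv.swap 1 2)
  have h1 : (List.ofFn ![a, b, c]).prod = a * b * c := by
    simp [mul_assoc]
  have h2 : (List.ofFn (![a, b, c] ∘ (Equiv.swap 1 2))).prod = a * c * b := by
    have : ![a, b, c] ∘ (Equiv.swap 1 2) = ![a, c, b] := by
      funext i; fin_cases i <;> simp [Equiv.swap_apply_def]
    rw [this]; simp [mul_assoc]
  rw [h1, h2] at this; exact this

lemma abel4 {M : Type*} [Monoid M] {f : M → ℂ} (h : IsAbelianFn f) :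
    ∀ a b c d : M, f (a * b * c * d) = f (a * c * b * d) := by
  intro a b c d
  have := h 4 (by norm_num) ![a, b, c, d] (Equiv.swap 1 2)
  have h1 : (List.ofFn ![a, b, c, d]).prod = a * b * c * d := by
    simp [mul_assoc]
  have h2 : (List.ofFn (![a, b, c, d] ∘ (Equiv.swap 1 2))).prod = a * c * b * d := by
    have : ![a, b, c, d] ∘ (Equiv.swap 1 2) = ![a, c, b, d] := by
      funext i; fin_cases i <;> simp [Equiv.swap_apply_def]
    rw [this]; simp [mul_assoc]
  rw [h1, h2] at this; exact this


lemma pairlemma {M : Type*} [Monoid M] {α β γ δ : M → ℂ}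
    (hα : ∀ x y, α (x * y) = α x * α y) (hβ : ∀ x y, β (x * y) = β x * β y)
    (hγ : ∀ x y, γ (x * y) = γ x * γ y) (hδ : ∀ x y, δ (x * y) = δ x * δ y)
    (h : ∀ x, α x + β x = γ x + δ x) :
    ∀ x y, (α x - β x) * (α y - β y) = (γ x - δ x) * (γ y - δ y) := by
  intro x y
  have hxy := h (x * y)
  rw [hα, hβ, hγ, hδ] at hxy
  have hx := h x
  have hy := h y
  linear_combination 2 * hxy - (α y + β y) * hx - (γ x + δ x) * hy

lemma corelemma {M : Type*} [Monoid M] [TopologicalSpace M] [ContinuousMul M]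
    (σ τ : M → M)
    (hσmul : ∀ x y : M, σ (x * y) = σ x * σ y) (hσinv : ∀ x : M, σ (σ x) = x)
    (hτmul : ∀ x y : M, τ (x * y) = τ y * τ x) (hτinv : ∀ x : M, τ (τ x) = x)
    (z₀ : M) (F : M → ℂ) (hF1 : F 1 = 1) (Fcont : Continuous F)
    (FA2 : ∀ a b : M, F (a * b) = F (b * a))
    (FA3 : ∀ a b c : M, F (a * b * c) = F (a * c * b))
    (FA4 : ∀ a b c d : M, F (a * b * c * d) = F (a * c * b * d))
    (hE : ∀ x y : M, F (x * σ y) + F (x * τ y) = 2 * F x * F y)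
    (hBz : ∀ x : M, F (x * z₀) = F x * F z₀) :
    ∃ χ : M → ℂ, Continuous χ ∧ (∀ x y : M, χ (x * y) = χ x * χ y) ∧
      (∀ x : M, χ (σ (τ x)) = χ (τ (σ x))) ∧
      ((∀ x : M, χ (σ x) = χ x) ∨ (∀ x : M, χ (τ x) = χ x)) ∧
      χ (σ (τ z₀)) = χ z₀ ∧ χ z₀ = F z₀ ∧
      (∀ x : M, F x = (χ x + χ (σ (τ x))) / 2) := by
  -- identity fixed by σ and τ
  have hσ1 : σ 1 = 1 := by
    have h := hσmul (σ 1) 1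
    rw [mul_one, hσinv] at h
    rw [one_mul] at h
    exact h.symm
  have hτ1 : τ 1 = 1 := by
    have h := hτmul (τ 1) 1
    rw [mul_one, hτinv] at h
    rw [mul_one] at h
    exact h.symm
  have hE1 : ∀ y : M, F (σ y) + F (τ y) = 2 * F y := by
    intro y
    have h := hE 1 y
    rw [one_mul, one_mul, hF1] at h
    linear_combination h
  -- the star identity
  have hstar : ∀ x y z : M,
      F (x * σ (τ z) * σ y) + F (x * τ (σ z) * τ y)
        = 2 * F y * (2 * F x * F z - F (x * z)) := by
    intro x y z
    have e3 := hE x (y * σ z)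
    rw [hσmul, hσinv, hτmul] at e3
    rw [← mul_assoc, ← mul_assoc] at e3
    rw [FA3 x (σ y) z] at e3
    have e4 := hE x (y * τ z)
    rw [hσmul, hτmul, hτinv] at e4
    rw [← mul_assoc, ← mul_assoc] at e4
    rw [FA3 x (σ y) (σ (τ z))] at e4
    have e10 := hE y z
    have c3 := hE (x * z) y
    linear_combination e3 + e4 - c3 + 2 * F x * e10
  have hstar1 : ∀ x z : M,
      F (x * σ (τ z)) + F (x * τ (σ z)) = 4 * F x * F z - 2 * F (x * z) := by
    intro x z
    have h := hstar x 1 z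
    rw [hσ1, hτ1, mul_one, mul_one, hF1] at h
    linear_combination h
  -- the long d'Alembert equation
  have hdia : ∀ x y z : M,
      F (x * y) * F z + F (x * z) * F y + F (y * z) * F x - F (x * y * z)
        = 2 * F x * F y * F z := by
    intro x y z
    have hσy := hstar x (σ y) z
    rw [hσinv] at hσy
    have hτy := hstar x (τ y) z
    rw [hτinv] at hτy
    rw [FA3 x (σ (τ z)) y] at hσy
    rw [FA3 x (τ (σ z)) y] at hτy
    have m1 : x * τ (σ z) * τ (σ y) = x * τ (σ (y * z)) := by
      rw [hσmul, hτmul, mul_assoc]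
    have m2 : x * σ (τ z) * σ (τ y) = x * σ (τ (y * z)) := by
      rw [hτmul, hσmul, mul_assoc]
    rw [m1] at hσy
    rw [m2] at hτy
    have hA := hstar1 (x * y) z
    have hB := hstar1 x (y * z)
    rw [← mul_assoc] at hB
    have h1 := hE1 y
    linear_combination (hσy + hτy - hA - hB) / 4
      + ((2 * F x * F z - F (x * z)) / 2) * h1
  -- expansion lemma
  have hexp : ∀ x z w : M, F (x * (z * w))
      = F (z * w) * F x + F (x * z) * F w + F (x * w) * F z - 2 * F z * F w * F x := by
    intro x z w
    linear_combination -(hdia z w x) + FA2 x (z * w) + F w * (FA2 z x) + F z * (FA2 w x)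
  -- rank one property
  have hrank : ∀ x y z w : M,
      (F (x * y) - F x * F y) * (F (z * w) - F z * F w)
        = (F (x * z) - F x * F z) * (F (y * w) - F y * F w) := by
    intro x y z w
    have H1 := hdia x y (z * w)
    have H2 := hdia x z (y * w)
    have e1 := hexp x z w
    have e2 := hexp y z w
    have e3 := hexp x y w
    have e4 := hexp z y w
    rw [FA2 z y] at e4
    have b5 : F (x * y * (z * w)) = F (x * z * (y * w)) := by
      rw [show x * y * (z * w) = x * y * z * w from (mul_assoc _ _ _).symm,
          show x * z * (y * w) = x * z * y * w from (mul_assoc _ _ _).symm]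
      exact FA4 x y z w
    rw [e1, e2, b5] at H1
    rw [e3, e4] at H2
    linear_combination H1 - H2
  by_cases hmul : ∀ p q : M, F (p * q) = F p * F q
  · -- Case 1 : F is multiplicative
    have hσmulF : ∀ p q : M, F (σ (p * q)) = F (σ p) * F (σ q) := by
      intro p q; rw [hσmul, hmul]
    have hτmulF : ∀ p q : M, F (τ (p * q)) = F (τ p) * F (τ q) := by
      intro p q; rw [hτmul, hmul, mul_comm]
    have hQ : ∀ x y : M, (F (σ x) - F (τ x)) * (F (σ y) - F (τ y))
        = (F x - F x) * (F y - F y) :=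
      pairlemma hσmulF hτmulF hmul hmul (fun x => by linear_combination hE1 x)
    have hστeq : ∀ x : M, F (σ x) = F (τ x) := by
      intro x
      have h0 : (F (σ x) - F (τ x)) * (F (σ x) - F (τ x)) = 0 := by
        linear_combination hQ x x
      exact sub_eq_zero.mp (mul_self_eq_zero.mp h0)
    have hFσ : ∀ x : M, F (σ x) = F x := fun x => by
      linear_combination (hE1 x) / 2 + (hστeq x) / 2
    have hFτ : ∀ x : M, F (τ x) = F x := fun x => by
      linear_combination (hE1 x) / 2 - (hστeq x) / 2
    refine ⟨F, Fcont, hmul, ?_, Or.inl hFσ, ?_, rfl, ?_⟩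
    · intro x; rw [hFσ, hFτ, hFτ, hFσ]
    · rw [hFσ, hFτ]
    · intro x; rw [hFσ, hFτ]; ring
  · -- Case 2 : F is not multiplicative
    push_neg at hmul
    obtain ⟨a, b, hab⟩ := hmul
    have hab' : F (a * b) - F a * F b ≠ 0 := sub_ne_zero.mpr hab
    have haa : F (a * a) - F a * F a ≠ 0 := by
      intro h0
      have hr := hrank a b a b
      rw [h0, zero_mul] at hr
      exact hab' (mul_self_eq_zero.mp hr)
    obtain ⟨c₀, hc₀⟩ := IsAlgClosed.exists_pow_nat_eq (k := ℂ)
      (F (a * a) - F a * F a) (n := 2) (by norm_num)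
    have hc0 : c₀ ≠ 0 := by
      intro h; rw [h] at hc₀; simp at hc₀; exact haa hc₀.symm
    set s : M → ℂ := fun x => (F (x * a) - F x * F a) / c₀ with hs_def
    have scont : Continuous s := by
      rw [hs_def]
      exact ((Fcont.comp (continuous_mul_right a)).sub
        (Fcont.mul continuous_const)).div_const c₀
    have hss : ∀ x y : M, s x * s y = F (x * y) - F x * F y := by
      intro x y
      simp only [hs_def]
      rw [div_mul_div_comm, div_eq_iff (mul_ne_zero hc0 hc0)]
      linear_combination hrank x a y a - (F (x * y) - F x * F y) * hc₀
    have hBadd : ∀ x y : M, F (x * y * a) - F (x * y) * F a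
        = F x * (F (y * a) - F y * F a) + F y * (F (x * a) - F x * F a) := by
      intro x y
      linear_combination -(hdia x y a)
    have hsadd : ∀ x y : M, s (x * y) = F x * s y + F y * s x := by
      intro x y
      simp only [hs_def]
      field_simp
      linear_combination hBadd x y
    have hs1 : s 1 = 0 := by
      simp only [hs_def]; rw [one_mul, hF1]; ring
    have hsz : s z₀ = 0 := by
      simp only [hs_def]; rw [FA2 z₀ a, hBz a]; ring
    have hsa : s a = c₀ := by
      simp only [hs_def]
      rw [div_eq_iff hc0]
      linear_combination -hc₀
    have hχ1mul : ∀ x y : M, F (x * y) + s (x * y) = (F x + s x) * (F y + s y) := by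
      intro x y
      linear_combination hsadd x y - hss x y
    have hχ2mul : ∀ x y : M, F (x * y) - s (x * y) = (F x - s x) * (F y - s y) := by
      intro x y
      linear_combination -hsadd x y - hss x y
    have hso : ∀ y : M, s (σ y) + s (τ y) = 0 := by
      intro y
      have key : s a * (s (σ y) + s (τ y)) = 0 := by
        have h := hE a y
        have e1 := hss a (σ y)
        have e2 := hss a (τ y)
        have e3 := hE1 y
        linear_combination e1 + e2 + h - F a * e3
      rw [hsa] at key
      exact (mul_eq_zero.mp key).resolve_left hc0
    have hP1 : ∀ x : M, (F (σ x) + s (σ x)) + (F (τ x) + s (τ x)) = 2 * F x := by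
      intro x; linear_combination hE1 x + hso x
    have hP2 : ∀ x : M, (F (σ x) - s (σ x)) + (F (τ x) - s (τ x)) = 2 * F x := by
      intro x; linear_combination hE1 x - hso x
    have hασ : ∀ p q : M, F (σ (p * q)) + s (σ (p * q))
        = (F (σ p) + s (σ p)) * (F (σ q) + s (σ q)) := by
      intro p q; rw [hσmul]; exact hχ1mul (σ p) (σ q)
    have hατ : ∀ p q : M, F (τ (p * q)) + s (τ (p * q))
        = (F (τ p) + s (τ p)) * (F (τ q) + s (τ q)) := by
      intro p q; rw [hτmul]; rw [hχ1mul (τ q) (τ p)]; ring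
    have hQ : ∀ x y : M,
        ((F (σ x) + s (σ x)) - (F (τ x) + s (τ x)))
          * ((F (σ y) + s (σ y)) - (F (τ y) + s (τ y)))
        = ((F x + s x) - (F x - s x)) * ((F y + s y) - (F y - s y)) :=
      pairlemma hασ hατ hχ1mul hχ2mul (fun x => by linear_combination hP1 x)
    have hsq : ((F (σ a) + s (σ a)) - (F (τ a) + s (τ a)) - 2 * c₀)
        * ((F (σ a) + s (σ a)) - (F (τ a) + s (τ a)) + 2 * c₀) = 0 := by
      linear_combination hQ a a + (4 * s a + 4 * c₀) * hsa
    rcases mul_eq_zero.mp hsq with ht | ht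
    · -- branch : χ₁ ∘ σ = χ₁
      have ht' : (F (σ a) + s (σ a)) - (F (τ a) + s (τ a)) = 2 * c₀ :=
        sub_eq_zero.mp ht
      have hd : ∀ x : M, (F (σ x) + s (σ x)) - (F (τ x) + s (τ x)) = 2 * s x := by
        intro x
        have h := hQ x a
        rw [ht'] at h
        have h2 : ((F (σ x) + s (σ x)) - (F (τ x) + s (τ x))) * (2 * c₀)
            = (2 * s x) * (2 * c₀) := by
          linear_combination h + 4 * s x * hsa
        exact mul_right_cancel₀ (mul_ne_zero two_ne_zero hc0) h2
      have hA : ∀ x : M, F (σ x) + s (σ x) = F x + s x := by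
        intro x; linear_combination (hd x) / 2 + (hP1 x) / 2
      have hB : ∀ x : M, F (τ x) + s (τ x) = F x - s x := by
        intro x; linear_combination (hP1 x) / 2 - (hd x) / 2
      have hχ2σ : ∀ x : M, F (σ x) - s (σ x) = F x - s x := by
        intro x
        have e := hB (τ x)
        rw [hτinv] at e
        linear_combination hP2 x + e
      have hστχ : ∀ x : M, F (σ (τ x)) + s (σ (τ x)) = F x - s x := by
        intro x; linear_combination hA (τ x) + hB x
      have hτσχ : ∀ x : M, F (τ (σ x)) + s (τ (σ x)) = F x - s x := by
        intro x; linear_combination hB (σ x) + hχ2σ x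
      refine ⟨fun x => F x + s x, Fcont.add scont, hχ1mul, ?_, Or.inl hA, ?_, ?_, ?_⟩
      · intro x
        show F (σ (τ x)) + s (σ (τ x)) = F (τ (σ x)) + s (τ (σ x))
        rw [hστχ, hτσχ]
      · show F (σ (τ z₀)) + s (σ (τ z₀)) = F z₀ + s z₀
        rw [hστχ, hsz]; ring
      · show F z₀ + s z₀ = F z₀
        rw [hsz, add_zero]
      · intro x
        show F x = ((F x + s x) + (F (σ (τ x)) + s (σ (τ x)))) / 2
        rw [hστχ]; ring
    · -- branch : χ₁ ∘ τ = χ₁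
      have ht' : (F (σ a) + s (σ a)) - (F (τ a) + s (τ a)) = -(2 * c₀) :=
        eq_neg_of_add_eq_zero_left ht
      have hd : ∀ x : M, (F (σ x) + s (σ x)) - (F (τ x) + s (τ x)) = -(2 * s x) := by
        intro x
        have h := hQ x a
        rw [ht'] at h
        have h2 : ((F (σ x) + s (σ x)) - (F (τ x) + s (τ x))) * (2 * c₀)
            = (-(2 * s x)) * (2 * c₀) := by
          linear_combination -h - 4 * s x * hsa
        exact mul_right_cancel₀ (mul_ne_zero two_ne_zero hc0) h2
      have hA : ∀ x : M, F (σ x) + s (σ x) = F x - s x := by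
        intro x; linear_combination (hd x) / 2 + (hP1 x) / 2
      have hB : ∀ x : M, F (τ x) + s (τ x) = F x + s x := by
        intro x; linear_combination (hP1 x) / 2 - (hd x) / 2
      have hχ2τ : ∀ x : M, F (τ x) - s (τ x) = F x - s x := by
        intro x
        have e := hA (σ x)
        rw [hσinv] at e
        linear_combination hP2 x + e
      have hστχ : ∀ x : M, F (σ (τ x)) + s (σ (τ x)) = F x - s x := by
        intro x; linear_combination hA (τ x) + hχ2τ x
      have hτσχ : ∀ x : M, F (τ (σ x)) + s (τ (σ x)) = F x - s x := by
        intro x; linear_combination hB (σ x) + hA x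
      refine ⟨fun x => F x + s x, Fcont.add scont, hχ1mul, ?_, Or.inr hB, ?_, ?_, ?_⟩
      · intro x
        show F (σ (τ x)) + s (σ (τ x)) = F (τ (σ x)) + s (τ (σ x))
        rw [hστχ, hτσχ]
      · show F (σ (τ z₀)) + s (σ (τ z₀)) = F z₀ + s z₀
        rw [hστχ, hsz]; ring
      · show F z₀ + s z₀ = F z₀
        rw [hsz, add_zero]
      · intro x
        show F x = ((F x + s x) + (F (σ (τ x)) + s (σ (τ x)))) / 2
        rw [hστχ]; ring

theorem stmt18 {M : Type*} [Monoid M] [TopologicalSpace M] [ContinuousMul M] (σ τ : M → M)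
    (hσcont : Continuous σ) (hτcont : Continuous τ)
    (hσmul : ∀ x y : M, σ (x * y) = σ x * σ y) (hσinv : ∀ x : M, σ (σ x) = x)
    (hτmul : ∀ x y : M, τ (x * y) = τ y * τ x) (hτinv : ∀ x : M, τ (τ x) = x)
    (z₀ : M) (f : M → ℂ) (hf : f ≠ 0) (hfcont : Continuous f) (habel : IsAbelianFn f)
    (heq : ∀ x y : M, f (x * σ y * z₀) + f (τ y * x * z₀) = 2 * f x * f y) :
    ∃ χ : M → ℂ, Continuous χ ∧ (∀ x y : M, χ (x * y) = χ x * χ y) ∧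
      (∀ x : M, χ (σ (τ x)) = χ (τ (σ x))) ∧
      ((∀ x : M, χ (σ x) = χ x) ∨ (∀ x : M, χ (τ x) = χ x)) ∧
      χ (σ (τ z₀)) = χ z₀ ∧ χ z₀ = f 1 ∧
      (∀ x : M, f x = f 1 * (χ x + χ (σ (τ x))) / 2) := by
  have hσ1 : σ 1 = 1 := by
    have h := hσmul (σ 1) 1
    rw [mul_one, hσinv] at h
    rw [one_mul] at h
    exact h.symm
  have hτ1 : τ 1 = 1 := by
    have h := hτmul (τ 1) 1
    rw [mul_one, hτinv] at h
    rw [mul_one] at h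
    exact h.symm
  have hab2 := abel2 habel
  have hab3 := abel3 habel
  have hab4 := abel4 habel
  have hz : ∀ x : M, f (x * z₀) = f x * f 1 := by
    intro x
    have h := heq x 1
    rw [hσ1, hτ1, mul_one, one_mul] at h
    linear_combination h / 2
  have hc : f 1 ≠ 0 := by
    intro h0
    apply hf
    funext x
    have h := heq x x
    rw [hz (x * σ x), hz (τ x * x), h0, mul_zero, mul_zero] at h
    have h2 : f x * f x = 0 := by linear_combination -h / 2
    exact mul_self_eq_zero.mp h2
  have hzz : f z₀ = f 1 * f 1 := by
    have h := hz 1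
    rw [one_mul] at h
    linear_combination h
  have hF1 : (fun x : M => f x / f 1) 1 = 1 := div_self hc
  have Fcont : Continuous (fun x : M => f x / f 1) := hfcont.div_const _
  have FA2 : ∀ a b : M, (fun x : M => f x / f 1) (a * b) = (fun x : M => f x / f 1) (b * a) :=
    fun a b => by simp only; rw [hab2 a b]
  have FA3 : ∀ a b c : M,
      (fun x : M => f x / f 1) (a * b * c) = (fun x : M => f x / f 1) (a * c * b) :=
    fun a b c => by simp only; rw [hab3 a b c]
  have FA4 : ∀ a b c d : M,
      (fun x : M => f x / f 1) (a * b * c * d) = (fun x : M => f x / f 1) (a * c * b * d) :=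
    fun a b c d => by simp only; rw [hab4 a b c d]
  have hE : ∀ x y : M, (fun x : M => f x / f 1) (x * σ y) + (fun x : M => f x / f 1) (x * τ y)
      = 2 * (fun x : M => f x / f 1) x * (fun x : M => f x / f 1) y := by
    intro x y
    simp only
    have h := heq x y
    rw [hz (x * σ y), hz (τ y * x), hab2 (τ y) x] at h
    field_simp
    linear_combination h
  have hBz : ∀ x : M, (fun x : M => f x / f 1) (x * z₀)
      = (fun x : M => f x / f 1) x * (fun x : M => f x / f 1) z₀ := by
    intro x
    simp only
    have h1 := hz x
    field_simp
    linear_combination f 1 * h1 - f x * hzz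
  obtain ⟨χ, hcont, hmul, hi, hii, hz1, hz2, hform⟩ :=
    corelemma σ τ hσmul hσinv hτmul hτinv z₀ (fun x : M => f x / f 1)
      hF1 Fcont FA2 FA3 FA4 hE hBz
  refine ⟨χ, hcont, hmul, hi, hii, hz1, ?_, ?_⟩
  · rw [hz2]
    show f z₀ / f 1 = f 1
    rw [hzz]
    field_simp
  · intro x
    have h := hform x
    rw [div_eq_iff hc] at h
    rw [h]; ring
end
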